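/- arXiv:2306.17352 — 2 statements merged into one kernel-verified Lean document; each statement's English description precedes it below -/
import Mathlib

section
/- If [n]! ≠ 0 in k, then the quantum Schur algebra S(n) is a semisimple ring. -/
noncomputable section

open scoped TensorProduct

/-- Balanced quantum integer `[m]` for a natural number `m`. -/
def qintN {k : Type*} [Field k] (v : k) (m : ℕ) : k :=
  ∑ t ∈ Finset.range m, v ^ ((m : ℤ) - 1 - 2 * t)

/-- Balanced quantum integer `[m]` for an integer `m`. -/
def qint {k : Type*} [Field k] (v : k) (m : ℤ) : k :=
  if 0 ≤ m then qintN v m.toNat else - qintN v (-m).toNat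

/-- Quantum factorial `[m]! = [1][2]⋯[m]`. -/
def qfact {k : Type*} [Field k] (v : k) (m : ℕ) : k :=
  ∏ j ∈ Finset.range m, qintN v (j + 1)

/-- `X(n) = {i ∈ ℤ : |i| ≤ n, i ≡ n (mod 2)}`. -/
def Xset (n : ℕ) : Finset ℤ :=
  (Finset.Icc (-(n : ℤ)) (n : ℤ)).filter (fun i => i % 2 = (n : ℤ) % 2)

/-- Generators of the quantum Schur algebra: `E`, `F`, and the idempotents
`1_i` (the latter indexed by all integers; those outside `X(n)` are set to
zero by the relations). -/
inductive SchurGen : Type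
  | E : SchurGen
  | F : SchurGen
  | unit : ℤ → SchurGen

variable (k : Type*) [Field k]

/-- The defining relations of the quantum Schur algebra `S(n)`. -/
inductive SchurRel (v : k) (n : ℕ) :
    FreeAlgebra k SchurGen → FreeAlgebra k SchurGen → Prop
  | idem : ∀ i ∈ Xset n, ∀ j ∈ Xset n,
      SchurRel v n
        (FreeAlgebra.ι k (SchurGen.unit i) * FreeAlgebra.ι k (SchurGen.unit j))
        (if i = j then FreeAlgebra.ι k (SchurGen.unit i) else 0)
  | sum_one : SchurRel v n (∑ i ∈ Xset n, FreeAlgebra.ι k (SchurGen.unit i)) 1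
  | unit_zero : ∀ i ∉ Xset n, SchurRel v n (FreeAlgebra.ι k (SchurGen.unit i)) 0
  | comm : SchurRel v n
      (FreeAlgebra.ι k SchurGen.E * FreeAlgebra.ι k SchurGen.F -
        FreeAlgebra.ι k SchurGen.F * FreeAlgebra.ι k SchurGen.E)
      (∑ i ∈ Xset n, qint v i • FreeAlgebra.ι k (SchurGen.unit i))
  | Eu (i : ℤ) : SchurRel v n
      (FreeAlgebra.ι k SchurGen.E * FreeAlgebra.ι k (SchurGen.unit i))
      (FreeAlgebra.ι k (SchurGen.unit (i + 2)) * FreeAlgebra.ι k SchurGen.E)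
  | Fu (i : ℤ) : SchurRel v n
      (FreeAlgebra.ι k SchurGen.F * FreeAlgebra.ι k (SchurGen.unit i))
      (FreeAlgebra.ι k (SchurGen.unit (i - 2)) * FreeAlgebra.ι k SchurGen.F)
  | uE (i : ℤ) : SchurRel v n
      (FreeAlgebra.ι k (SchurGen.unit i) * FreeAlgebra.ι k SchurGen.E)
      (FreeAlgebra.ι k SchurGen.E * FreeAlgebra.ι k (SchurGen.unit (i - 2)))
  | uF (i : ℤ) : SchurRel v n
      (FreeAlgebra.ι k (SchurGen.unit i) * FreeAlgebra.ι k SchurGen.F)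
      (FreeAlgebra.ι k SchurGen.F * FreeAlgebra.ι k (SchurGen.unit (i + 2)))

/-- The quantum Schur algebra `S(n)`, presented by generators and relations. -/
abbrev SchurAlg (v : k) (n : ℕ) := RingQuot (SchurRel k v n)

/-- The generator `E` of `S(n)`. -/
def SE (v : k) (n : ℕ) : SchurAlg k v n :=
  RingQuot.mkAlgHom k (SchurRel k v n) (FreeAlgebra.ι k SchurGen.E)

/-- The generator `F` of `S(n)`. -/
def SF (v : k) (n : ℕ) : SchurAlg k v n :=
  RingQuot.mkAlgHom k (SchurRel k v n) (FreeAlgebra.ι k SchurGen.F)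

/-- The generator `1_i` of `S(n)`. -/
def Sunit (v : k) (n : ℕ) (i : ℤ) : SchurAlg k v n :=
  RingQuot.mkAlgHom k (SchurRel k v n) (FreeAlgebra.ι k (SchurGen.unit i))

/-! ### Auxiliary development -/

section Aux

variable {k : Type*} [Field k]

section Quantum

variable (v : k)

lemma qintN_zero : qintN v 0 = 0 := by simp [qintN]

lemma qintN_one : qintN v 1 = 1 := by simp [qintN]

lemma qintN_succ (hv : v ≠ 0) (m : ℕ) :
    qintN v (m + 1) = v ^ (m : ℤ) + v ^ (-1 : ℤ) * qintN v m := by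
  unfold qintN
  rw [Finset.sum_range_succ']
  have h1 : ∑ t ∈ Finset.range m, v ^ (((m + 1 : ℕ) : ℤ) - 1 - 2 * ((t + 1 : ℕ) : ℤ))
      = v ^ (-1 : ℤ) * qintN v m := by
    unfold qintN
    rw [Finset.mul_sum]
    apply Finset.sum_congr rfl
    intro t _
    rw [← zpow_add₀ hv]
    congr 1
    push_cast
    ring
  push_cast at h1 ⊢
  rw [h1, add_comm]
  congr 1
  push_cast
  ring_nf

lemma keyE (hv : v ≠ 0) (A c : ℕ) :
    v ^ (A : ℤ) * qintN v (A + c) - v ^ ((A : ℤ) + c) * qintN v A = qintN v c := by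
  have h1 : v ^ (A : ℤ) * qintN v (A + c)
      = ∑ t ∈ Finset.range (A + c), v ^ ((2 * A + c : ℤ) - 1 - 2 * t) := by
    unfold qintN
    rw [Finset.mul_sum]
    apply Finset.sum_congr rfl
    intro t _
    rw [← zpow_add₀ hv]
    congr 1
    push_cast
    ring
  have h2 : v ^ ((A : ℤ) + c) * qintN v A
      = ∑ t ∈ Finset.range A, v ^ ((2 * A + c : ℤ) - 1 - 2 * t) := by
    unfold qintN
    rw [Finset.mul_sum]
    apply Finset.sum_congr rfl
    intro t _
    rw [← zpow_add₀ hv]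
    congr 1
    push_cast
    ring
  have h3 : ∑ t ∈ Finset.range (A + c), v ^ ((2 * A + c : ℤ) - 1 - 2 * t)
      = ∑ t ∈ Finset.range A, v ^ ((2 * A + c : ℤ) - 1 - 2 * t)
        + ∑ t ∈ Finset.Ico A (A + c), v ^ ((2 * A + c : ℤ) - 1 - 2 * t) := by
    rw [Finset.range_eq_Ico, Finset.range_eq_Ico]
    exact (Finset.sum_Ico_consecutive (fun t : ℕ => v ^ ((2 * A + c : ℤ) - 1 - 2 * t)) (Nat.zero_le A) (Nat.le_add_right A c)).symm
  have h4 : ∑ t ∈ Finset.Ico A (A + c), v ^ ((2 * A + c : ℤ) - 1 - 2 * t)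
      = qintN v c := by
    rw [Finset.sum_Ico_eq_sum_range]
    simp only [Nat.add_sub_cancel_left]
    unfold qintN
    apply Finset.sum_congr rfl
    intro t _
    congr 1
    push_cast
    ring
  rw [h1, h2, h3, h4]
  ring

lemma keyD (hv : v ≠ 0) (a c : ℕ) :
    qintN v (a + 1) * qintN v (a + c) - qintN v a * qintN v (a + c + 1) = qintN v c := by
  have hE := keyE v hv a c
  have e1 : a + c + 1 = (a + c) + 1 := rfl
  rw [qintN_succ v hv a, e1, qintN_succ v hv (a + c)]
  push_cast at hE ⊢
  linear_combination hE + qintN v (a + c) * v ^ (-1 : ℤ) * qintN v a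
    - qintN v a * v ^ (-1 : ℤ) * qintN v (a + c)

lemma qint_natCast (c : ℕ) : qint v (c : ℤ) = qintN v c := by
  simp [qint]

lemma qint_neg_natCast (c : ℕ) : qint v (-(c : ℤ)) = - qintN v c := by
  rcases Nat.eq_zero_or_pos c with h | h
  · subst h; simp [qint, qintN]
  · have hneg : ¬ (0 ≤ -(c : ℤ)) := by omega
    simp only [qint, hneg, if_false, neg_neg, Int.toNat_natCast]

/-- The key commutator scalar identity, in the form needed for matrix entries. -/
lemma corD (hv : v ≠ 0) (p m : ℕ) (hpm : p ≤ m) :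
    qintN v (m - p) * qintN v (p + 1) - qintN v p * qintN v (m - p + 1)
      = qint v ((m : ℤ) - 2 * p) := by
  rcases le_or_gt (2 * p) m with h | h
  · have e0 : (m : ℤ) - 2 * p = ((m - 2 * p : ℕ) : ℤ) := by push_cast; omega
    rw [e0, qint_natCast]
    have hD := keyD v hv p (m - 2 * p)
    have e1 : p + (m - 2 * p) = m - p := by omega
    rw [e1] at hD
    linear_combination hD
  · have e0 : (m : ℤ) - 2 * p = -(((2 * p - m : ℕ)) : ℤ) := by push_cast; omega
    rw [e0, qint_neg_natCast]
    have hD := keyD v hv (m - p) (2 * p - m)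
    have e1 : (m - p) + (2 * p - m) = p := by omega
    rw [e1] at hD
    linear_combination -hD

lemma qintN_ne_zero {v : k} {n : ℕ} (hq : qfact v n ≠ 0) {t : ℕ} (h1 : 0 < t) (ht : t ≤ n) :
    qintN v t ≠ 0 := by
  intro h0
  apply hq
  apply Finset.prod_eq_zero (i := t - 1) (by simp; omega)
  have : t - 1 + 1 = t := by omega
  rw [this, h0]

end Quantum

/-! ### Matrix rings over a field are semisimple -/

section MatrixSS

variable (ι : Type*) [Fintype ι] [DecidableEq ι] [Nonempty ι]

open Matrix in
/-- The column submodule of the matrix ring. -/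
def colSub (j : ι) : Submodule (Matrix ι ι k) (Matrix ι ι k) where
  carrier := {M : Matrix ι ι k | ∀ a b, b ≠ j → M a b = 0}
  add_mem' := by
    intro M N hM hN a b hb
    simp [Matrix.add_apply, hM a b hb, hN a b hb]
  zero_mem' := by intro a b _; simp
  smul_mem' := by
    intro X M hM a b hb
    have h : (X • M) a b = ∑ c, X a c * M c b := Matrix.mul_apply
    rw [h]
    apply Finset.sum_eq_zero
    intro c _
    rw [hM c b hb, mul_zero]

open Matrix in
lemma colSub_simple (j : ι) : IsAtom (colSub (k := k) ι j) := by
  constructor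
  · intro h
    have h1 : Matrix.single j j (1 : k) ∈ colSub (k := k) ι j := by
      intro a b hb
      simp only [Matrix.single, Matrix.of_apply, ite_eq_right_iff, and_imp]
      exact fun _ h' => absurd h'.symm hb
    rw [h] at h1
    have h2 := (Submodule.mem_bot _).mp h1
    have h3 := congrFun (congrFun h2 j) j
    simp [Matrix.single] at h3
  · intro N hN
    by_contra hne
    obtain ⟨M, hMN, hM0⟩ := Submodule.exists_mem_ne_zero_of_ne_bot hne
    have hMcol : M ∈ colSub (k := k) ι j := le_of_lt hN hMN
    have hex : ∃ a, M a j ≠ 0 := by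
      by_contra hc
      push_neg at hc
      apply hM0
      ext a b
      by_cases hb : b = j
      · subst hb; simp [hc a]
      · simp [hMcol a b hb]
    obtain ⟨a, ha⟩ := hex
    have hle : colSub (k := k) ι j ≤ N := by
      intro T hT
      have hTM : T = (Matrix.of fun x y => if y = a then T x j * (M a j)⁻¹ else 0) * M := by
        ext x y
        rw [Matrix.mul_apply]
        rw [Finset.sum_eq_single a]
        · simp only [Matrix.of_apply, if_pos rfl]
          by_cases hy : y = j
          · subst hy
            rw [if_pos trivial]
            field_simp
          · rw [hT x y hy, hMcol a y hy, mul_zero]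
        · intro c _ hc
          simp [Matrix.of_apply, hc]
        · simp
      rw [hTM]
      exact N.smul_mem _ hMN
    exact absurd (le_antisymm (le_of_lt hN) hle) (ne_of_lt hN)

open Matrix in
lemma matrix_isSemisimpleRing : IsSemisimpleRing (Matrix ι ι k) := by
  apply IsSemisimpleModule.of_sSup_simples_eq_top
  rw [eq_top_iff]
  intro M _
  have hM : M = ∑ j : ι, (Matrix.of fun a b => if b = j then M a b else 0) := by
    ext a b
    rw [Matrix.sum_apply]
    have : ∀ j ∈ Finset.univ, (Matrix.of fun a b => if b = j then M a b else 0) a b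
        = if b = j then M a b else 0 := fun j _ => rfl
    rw [Finset.sum_congr rfl this, Finset.sum_ite_eq Finset.univ b (fun _ => M a b)]
    simp
  rw [hM]
  apply Submodule.sum_mem
  intro j _
  have hcol : (Matrix.of fun a b => if b = j then M a b else 0) ∈ colSub (k := k) ι j := by
    intro a b hb
    simp [Matrix.of_apply, hb]
  exact Submodule.mem_sSup_of_mem
    (show colSub (k := k) ι j ∈ {m : Submodule (Matrix ι ι k) (Matrix ι ι k) | IsSimpleModule _ m}
      from isSimpleModule_iff_isAtom.mpr (colSub_simple ι j)) hcol

end MatrixSS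

end Aux

section SchurLemmas

variable (k : Type*) [Field k] (v : k) (n : ℕ)

open RingQuot

lemma b_uzero {i : ℤ} (h : i ∉ Xset n) : Sunit k v n i = 0 := by
  have h1 := RingQuot.mkAlgHom_rel k (SchurRel.unit_zero (v := v) (n := n) i h)
  rw [map_zero] at h1
  exact h1

lemma b_umul (i j : ℤ) :
    Sunit k v n i * Sunit k v n j = if i = j then Sunit k v n i else 0 := by
  by_cases hi : i ∈ Xset n
  · by_cases hj : j ∈ Xset n
    · have h1 := RingQuot.mkAlgHom_rel k (SchurRel.idem (v := v) (n := n) i hi j hj)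
      rw [map_mul, apply_ite (RingQuot.mkAlgHom k (SchurRel k v n)), map_zero] at h1
      exact h1
    · rw [b_uzero k v n hj, mul_zero]
      split_ifs with h
      · exact (b_uzero k v n (h ▸ hj)).symm
      · rfl
  · rw [b_uzero k v n hi, zero_mul]
    split_ifs <;> rfl

lemma b_sum : ∑ i ∈ Xset n, Sunit k v n i = 1 := by
  have h1 := RingQuot.mkAlgHom_rel k (SchurRel.sum_one (k := k) (v := v) (n := n))
  rw [map_sum, map_one] at h1
  exact h1

lemma b_comm : SE k v n * SF k v n
    = SF k v n * SE k v n + ∑ i ∈ Xset n, qint v i • Sunit k v n i := by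
  have h1 := RingQuot.mkAlgHom_rel k (SchurRel.comm (k := k) (v := v) (n := n))
  rw [map_sub, map_mul, map_mul, map_sum] at h1
  simp only [map_smul] at h1
  rw [sub_eq_iff_eq_add'] at h1
  exact h1

lemma b_Eu (i : ℤ) : SE k v n * Sunit k v n i = Sunit k v n (i + 2) * SE k v n := by
  have h1 := RingQuot.mkAlgHom_rel k (SchurRel.Eu (k := k) (v := v) (n := n) i)
  rw [map_mul, map_mul] at h1
  exact h1

lemma b_Fu (i : ℤ) : SF k v n * Sunit k v n i = Sunit k v n (i - 2) * SF k v n := by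
  have h1 := RingQuot.mkAlgHom_rel k (SchurRel.Fu (k := k) (v := v) (n := n) i)
  rw [map_mul, map_mul] at h1
  exact h1

lemma b_uE (i : ℤ) : Sunit k v n i * SE k v n = SE k v n * Sunit k v n (i - 2) := by
  have h1 := RingQuot.mkAlgHom_rel k (SchurRel.uE (k := k) (v := v) (n := n) i)
  rw [map_mul, map_mul] at h1
  exact h1

lemma b_uF (i : ℤ) : Sunit k v n i * SF k v n = SF k v n * Sunit k v n (i + 2) := by
  have h1 := RingQuot.mkAlgHom_rel k (SchurRel.uF (k := k) (v := v) (n := n) i)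
  rw [map_mul, map_mul] at h1
  exact h1

lemma p_Fu (a : ℕ) (i : ℤ) :
    SF k v n ^ a * Sunit k v n i = Sunit k v n (i - 2 * a) * SF k v n ^ a := by
  induction a generalizing i with
  | zero => simp
  | succ a ih =>
      rw [pow_succ, mul_assoc, b_Fu, ← mul_assoc, ih, mul_assoc, ← pow_succ]
      congr 2
      push_cast
      ring

lemma p_uF (a : ℕ) (i : ℤ) :
    Sunit k v n i * SF k v n ^ a = SF k v n ^ a * Sunit k v n (i + 2 * a) := by
  induction a generalizing i with
  | zero => simp
  | succ a ih =>
      rw [pow_succ, ← mul_assoc, ih, mul_assoc, b_uF, ← mul_assoc, ← pow_succ]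
      congr 2
      push_cast
      ring

lemma p_Eu (a : ℕ) (i : ℤ) :
    SE k v n ^ a * Sunit k v n i = Sunit k v n (i + 2 * a) * SE k v n ^ a := by
  induction a generalizing i with
  | zero => simp
  | succ a ih =>
      rw [pow_succ, mul_assoc, b_Eu, ← mul_assoc, ih, mul_assoc, ← pow_succ]
      congr 2
      push_cast
      ring

lemma p_uE (a : ℕ) (i : ℤ) :
    Sunit k v n i * SE k v n ^ a = SE k v n ^ a * Sunit k v n (i - 2 * a) := by
  induction a generalizing i with
  | zero => simp
  | succ a ih =>
      rw [pow_succ, ← mul_assoc, ih, mul_assoc, b_uE, ← mul_assoc, ← pow_succ]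
      congr 2
      push_cast
      ring

lemma b_uC (i : ℤ) :
    Sunit k v n i * (∑ l ∈ Xset n, qint v l • Sunit k v n l)
      = qint v i • Sunit k v n i := by
  rw [Finset.mul_sum]
  have h1 : ∀ l ∈ Xset n, Sunit k v n i * (qint v l • Sunit k v n l)
      = if i = l then qint v l • Sunit k v n i else 0 := by
    intro l _
    rw [mul_smul_comm, b_umul]
    split_ifs with h
    · rfl
    · rw [smul_zero]
  rw [Finset.sum_congr rfl h1, Finset.sum_ite_eq]
  split_ifs with h
  · rfl
  · rw [b_uzero k v n h, smul_zero]

lemma swap1 (i : ℤ) :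
    (SE k v n * Sunit k v n (i - 2)) * SF k v n
      = SF k v n * (SE k v n * Sunit k v n i) + qint v i • Sunit k v n i := by
  have hEu : SE k v n * Sunit k v n (i - 2) = Sunit k v n i * SE k v n := by
    rw [b_Eu]; congr 2; ring
  have huE : Sunit k v n (i + 2) * SE k v n = SE k v n * Sunit k v n i := by
    rw [b_uE]; congr 2; ring
  calc (SE k v n * Sunit k v n (i - 2)) * SF k v n
      = (Sunit k v n i * SE k v n) * SF k v n := by rw [hEu]
    _ = Sunit k v n i * (SE k v n * SF k v n) := by rw [mul_assoc]
    _ = Sunit k v n i * (SF k v n * SE k v n)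
        + qint v i • Sunit k v n i := by
          rw [b_comm, mul_add, b_uC]
    _ = ((Sunit k v n i * SF k v n) * SE k v n) + qint v i • Sunit k v n i := by
          rw [mul_assoc]
    _ = ((SF k v n * Sunit k v n (i + 2)) * SE k v n) + qint v i • Sunit k v n i := by
          rw [b_uF]
    _ = (SF k v n * (Sunit k v n (i + 2) * SE k v n)) + qint v i • Sunit k v n i := by
          rw [mul_assoc]
    _ = SF k v n * (SE k v n * Sunit k v n i) + qint v i • Sunit k v n i := by
          rw [huE]

lemma p_comm (a : ℕ) (i : ℤ) :
    SE k v n * (SF k v n ^ (a + 1) * Sunit k v n i)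
      = SF k v n ^ (a + 1) * (SE k v n * Sunit k v n i)
        + (∑ t ∈ Finset.range (a + 1), qint v (i - 2 * t)) • (SF k v n ^ a * Sunit k v n i) := by
  induction a generalizing i with
  | zero =>
      rw [pow_one]
      have h1 : SF k v n * Sunit k v n i = Sunit k v n (i - 2) * SF k v n := b_Fu k v n i
      rw [h1, ← mul_assoc, swap1]
      simp
  | succ a ih =>
      have huF : Sunit k v n (i - 2) * SF k v n = SF k v n * Sunit k v n i := by
        rw [b_uF]; congr 2; ring
      have step1 : SE k v n * (SF k v n ^ (a + 2) * Sunit k v n i)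
          = (SE k v n * (SF k v n ^ (a + 1) * Sunit k v n (i - 2))) * SF k v n := by
        rw [pow_succ, mul_assoc, b_Fu, ← mul_assoc (SF k v n ^ (a+1)), ← mul_assoc]
      rw [step1, ih, add_mul, smul_mul_assoc]
      have t2 : (SF k v n ^ a * Sunit k v n (i - 2)) * SF k v n = SF k v n ^ (a + 1) * Sunit k v n i := by
        rw [mul_assoc, huF, ← mul_assoc, ← pow_succ]
      have t1 : (SF k v n ^ (a + 1) * (SE k v n * Sunit k v n (i - 2))) * SF k v n
          = SF k v n ^ (a + 2) * (SE k v n * Sunit k v n i)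
            + qint v i • (SF k v n ^ (a + 1) * Sunit k v n i) := by
        rw [mul_assoc, swap1, mul_add, mul_smul_comm, ← mul_assoc, ← pow_succ]
      rw [t1, t2, add_assoc, ← add_smul]
      congr 2
      rw [Finset.sum_range_succ' (fun t => qint v (i - 2 * (t : ℕ))) (a + 1)]
      have hterm : ∀ t ∈ Finset.range (a + 1),
          qint v (i - 2 * (((t : ℕ) + 1 : ℕ) : ℤ)) = qint v (i - 2 - 2 * (t : ℕ)) := by
        intro t _
        congr 1
        push_cast
        ring
      rw [Finset.sum_congr rfl hterm]
      have h0 : i - 2 * ((0 : ℕ) : ℤ) = i := by push_cast; ring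
      rw [h0, add_comm]

end SchurLemmas

section Rep

variable {k : Type*} [Field k] (v : k) (n : ℕ)

/-- The product of matrix algebras that `S(n)` will be identified with. -/
abbrev BAlg (k : Type*) [Field k] (n : ℕ) :=
  ∀ r : Fin (n / 2 + 1), Matrix (Fin (n - 2 * r + 1)) (Fin (n - 2 * r + 1)) k

/-- Matrix of `E` on the simple module with highest weight `n - 2r`. -/
def eMat (r : Fin (n / 2 + 1)) : Matrix (Fin (n - 2 * r + 1)) (Fin (n - 2 * r + 1)) k :=
  Matrix.of fun p q => if (p : ℕ) + 1 = (q : ℕ) then qintN v (n - 2 * r - p) else 0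

/-- Matrix of `F`. -/
def fMat (r : Fin (n / 2 + 1)) : Matrix (Fin (n - 2 * r + 1)) (Fin (n - 2 * r + 1)) k :=
  Matrix.of fun p q => if (p : ℕ) = (q : ℕ) + 1 then qintN v p else 0

/-- Matrix of the idempotent `1_i`. -/
def uMat (i : ℤ) (r : Fin (n / 2 + 1)) :
    Matrix (Fin (n - 2 * r + 1)) (Fin (n - 2 * r + 1)) k :=
  Matrix.diagonal fun q => if (n : ℤ) - 2 * r - 2 * (q : ℕ) = i then 1 else 0

lemma wmem (r : Fin (n / 2 + 1)) (q : Fin (n - 2 * r + 1)) :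
    (n : ℤ) - 2 * (r : ℕ) - 2 * (q : ℕ) ∈ Xset n := by
  have h1 := r.isLt
  have h2 := q.isLt
  simp only [Xset, Finset.mem_filter, Finset.mem_Icc]
  constructor
  · constructor <;> omega
  · omega

lemma mm1 (i j : ℤ) (r : Fin (n / 2 + 1)) :
    uMat (k := k) n i r * uMat (k := k) n j r
      = if i = j then uMat (k := k) n i r else 0 := by
  by_cases hij : i = j
  · subst hij
    rw [if_pos rfl]
    unfold uMat
    rw [Matrix.diagonal_mul_diagonal]
    have : (fun q : Fin (n - 2 * r + 1) =>
        (if (n : ℤ) - 2 * r - 2 * (q : ℕ) = i then (1:k) else 0)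
          * (if (n : ℤ) - 2 * r - 2 * (q : ℕ) = i then 1 else 0))
        = fun q : Fin (n - 2 * r + 1) =>
            (if (n : ℤ) - 2 * r - 2 * (q : ℕ) = i then (1:k) else 0) := by
      funext q
      split_ifs <;> ring
    rw [this]
  · rw [if_neg hij]
    unfold uMat
    rw [Matrix.diagonal_mul_diagonal]
    have : (fun q : Fin (n - 2 * r + 1) =>
        (if (n : ℤ) - 2 * r - 2 * (q : ℕ) = i then (1:k) else 0)
          * (if (n : ℤ) - 2 * r - 2 * (q : ℕ) = j then 1 else 0)) = fun _ => 0 := by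
      funext q
      split_ifs with h1 h2
      · exact absurd (h1.symm.trans h2) hij
      all_goals ring
    rw [this, Matrix.diagonal_zero]

lemma mm3 {i : ℤ} (hi : i ∉ Xset n) (r : Fin (n / 2 + 1)) : uMat (k := k) n i r = 0 := by
  unfold uMat
  have : (fun q : Fin (n - 2 * r + 1) =>
      (if (n : ℤ) - 2 * r - 2 * (q : ℕ) = i then (1:k) else 0)) = fun _ => 0 := by
    funext q
    rw [if_neg]
    intro h
    exact hi (h ▸ wmem n r q)
  rw [this, Matrix.diagonal_zero]

lemma mm2 (r : Fin (n / 2 + 1)) :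
    ∑ i ∈ Xset n, uMat (k := k) n i r = 1 := by
  ext p q
  rw [Matrix.sum_apply]
  unfold uMat
  by_cases hpq : p = q
  · subst hpq
    simp only [Matrix.diagonal_apply_eq]
    rw [Finset.sum_ite_eq (Xset n) _ (fun _ => (1 : k))]
    rw [if_pos (wmem n r p), Matrix.one_apply_eq]
  · have : ∀ i ∈ Xset n,
        Matrix.diagonal (fun q : Fin (n - 2*r+1) =>
          if (n : ℤ) - 2 * r - 2 * (q : ℕ) = i then (1:k) else 0) p q = 0 := by
      intro i _
      exact Matrix.diagonal_apply_ne _ hpq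
    rw [Finset.sum_congr rfl this, Finset.sum_const_zero, Matrix.one_apply_ne hpq]

lemma pe_ef (r : Fin (n / 2 + 1)) :
    eMat (k := k) v n r * fMat (k := k) v n r
      = Matrix.diagonal fun p : Fin (n - 2*r+1) =>
          qintN v (n - 2 * r - p) * qintN v (p + 1) := by
  ext p q
  rw [Matrix.mul_apply, Matrix.diagonal_apply]
  by_cases hp : (p : ℕ) + 1 < n - 2 * r + 1
  · rw [Finset.sum_eq_single (⟨(p:ℕ)+1, hp⟩ : Fin (n - 2*r+1))
      (fun j _ hj => by
        simp only [eMat, Matrix.of_apply]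
        rw [if_neg fun h => hj (Fin.ext h.symm), zero_mul])
      (fun h => absurd (Finset.mem_univ _) h)]
    simp only [eMat, fMat, Matrix.of_apply]
    by_cases hpq : p = q
    · subst hpq
      rw [if_pos (by trivial), if_pos (by trivial), if_pos rfl]
    · have hval : (p : ℕ) ≠ (q : ℕ) := fun h => hpq (Fin.ext h)
      rw [if_pos (by trivial), if_neg (fun h => hval (Nat.add_right_cancel h)),
        if_neg hpq, mul_zero]
  · have hpm : (p : ℕ) = n - 2 * r := by have := p.isLt; omega
    rw [Finset.sum_eq_zero (fun j _ => by
      simp only [eMat, Matrix.of_apply]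
      rw [if_neg (by have := j.isLt; omega), zero_mul])]
    have h0 : n - 2 * r - (p : ℕ) = 0 := by omega
    rw [h0, qintN_zero, zero_mul, ite_self]

lemma pe_fe (r : Fin (n / 2 + 1)) :
    fMat (k := k) v n r * eMat (k := k) v n r
      = Matrix.diagonal fun p : Fin (n - 2*r+1) =>
          qintN v p * qintN v (n - 2 * r - p + 1) := by
  ext p q
  rw [Matrix.mul_apply, Matrix.diagonal_apply]
  by_cases hp : 0 < (p : ℕ)
  · have hlt : (p : ℕ) - 1 < n - 2 * r + 1 := by have := p.isLt; omega
    rw [Finset.sum_eq_single (⟨(p:ℕ)-1, hlt⟩ : Fin (n - 2*r+1))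
      (fun j _ hj => by
        simp only [fMat, Matrix.of_apply]
        by_cases h : (p : ℕ) = (j : ℕ) + 1
        · exact absurd (Fin.ext (show (j:ℕ) = ((⟨(p:ℕ)-1, hlt⟩ : Fin (n-2*r+1)):ℕ)
            from by show (j:ℕ) = (p:ℕ)-1; omega)) hj
        · rw [if_neg h, zero_mul])
      (fun h => absurd (Finset.mem_univ _) h)]
    simp only [fMat, eMat, Matrix.of_apply]
    by_cases hpq : p = q
    · subst hpq
      rw [if_pos (show (p:ℕ) = ((⟨(p:ℕ)-1, hlt⟩ : Fin (n - 2*r+1)) : ℕ) + 1 by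
          show (p:ℕ) = (p:ℕ) - 1 + 1; omega),
        if_pos (show ((⟨(p:ℕ)-1, hlt⟩ : Fin (n - 2*r+1)) : ℕ) + 1 = (p:ℕ) by
          show (p:ℕ) - 1 + 1 = (p:ℕ); omega),
        if_pos rfl]
      show qintN v (p : ℕ) * qintN v (n - 2 * r - ((p:ℕ) - 1)) = _
      have harg : n - 2 * r - ((p:ℕ) - 1) = n - 2 * r - (p:ℕ) + 1 := by
        have := p.isLt; omega
      rw [harg]
    · have hval : (p : ℕ) ≠ (q : ℕ) := fun h => hpq (Fin.ext h)
      rw [if_pos (show (p:ℕ) = ((⟨(p:ℕ)-1, hlt⟩ : Fin (n - 2*r+1)) : ℕ) + 1 by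
          show (p:ℕ) = (p:ℕ) - 1 + 1; omega),
        if_neg (show ¬ (((⟨(p:ℕ)-1, hlt⟩ : Fin (n - 2*r+1)) : ℕ) + 1 = (q:ℕ)) by
          show ¬ ((p:ℕ) - 1 + 1 = (q:ℕ)); omega),
        if_neg hpq, mul_zero]
  · have hp0 : (p : ℕ) = 0 := by omega
    rw [Finset.sum_eq_zero (fun j _ => by
      simp only [fMat, Matrix.of_apply]
      rw [if_neg (by omega), zero_mul])]
    rw [hp0, qintN_zero, zero_mul, ite_self]

lemma mm4 (hv : v ≠ 0) (r : Fin (n / 2 + 1)) :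
    eMat (k := k) v n r * fMat (k := k) v n r - fMat (k := k) v n r * eMat (k := k) v n r
      = ∑ i ∈ Xset n, qint v i • uMat (k := k) n i r := by
  ext p q
  rw [Matrix.sub_apply, pe_ef, pe_fe, Matrix.sum_apply]
  by_cases hpq : p = q
  · subst hpq
    have hsummand : ∀ i ∈ Xset n, (qint v i • uMat (k := k) n i r) p p
        = if (n : ℤ) - 2 * r - 2 * (p : ℕ) = i then qint v i else 0 := by
      intro i _
      rw [Matrix.smul_apply]
      unfold uMat
      rw [Matrix.diagonal_apply_eq]
      split_ifs <;> simp
    rw [Finset.sum_congr rfl hsummand, Finset.sum_ite_eq (Xset n) _ (fun i => qint v i),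
      if_pos (wmem n r p), Matrix.diagonal_apply_eq, Matrix.diagonal_apply_eq]
    have hple : (p : ℕ) ≤ n - 2 * r := by have := p.isLt; omega
    have hD := corD v hv (p : ℕ) (n - 2 * r) hple
    have hcast : ((n - 2 * r : ℕ) : ℤ) = (n : ℤ) - 2 * (r : ℕ) := by
      have := r.isLt; omega
    rw [hcast] at hD
    rw [hD]
  · have hsummand : ∀ i ∈ Xset n, (qint v i • uMat (k := k) n i r) p q = 0 := by
      intro i _
      rw [Matrix.smul_apply]
      unfold uMat
      rw [Matrix.diagonal_apply_ne _ hpq, smul_zero]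
    rw [Finset.sum_congr rfl hsummand, Finset.sum_const_zero,
      Matrix.diagonal_apply_ne _ hpq, Matrix.diagonal_apply_ne _ hpq, sub_zero]

lemma mm5 (i : ℤ) (r : Fin (n / 2 + 1)) :
    eMat (k := k) v n r * uMat (k := k) n i r
      = uMat (k := k) n (i + 2) r * eMat (k := k) v n r := by
  ext p q
  unfold eMat uMat
  rw [Matrix.mul_diagonal, Matrix.diagonal_mul]
  simp only [Matrix.of_apply, mul_ite, ite_mul, mul_one, mul_zero, one_mul, zero_mul]
  split_ifs <;> first | rfl | omega

lemma mm6 (i : ℤ) (r : Fin (n / 2 + 1)) :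
    fMat (k := k) v n r * uMat (k := k) n i r
      = uMat (k := k) n (i - 2) r * fMat (k := k) v n r := by
  ext p q
  unfold fMat uMat
  rw [Matrix.mul_diagonal, Matrix.diagonal_mul]
  simp only [Matrix.of_apply, mul_ite, ite_mul, mul_one, mul_zero, one_mul, zero_mul]
  split_ifs <;> first | rfl | omega

lemma mm7 (i : ℤ) (r : Fin (n / 2 + 1)) :
    uMat (k := k) n i r * eMat (k := k) v n r
      = eMat (k := k) v n r * uMat (k := k) n (i - 2) r := by
  ext p q
  unfold eMat uMat
  rw [Matrix.mul_diagonal, Matrix.diagonal_mul]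
  simp only [Matrix.of_apply, mul_ite, ite_mul, mul_one, mul_zero, one_mul, zero_mul]
  split_ifs <;> first | rfl | omega

lemma mm8 (i : ℤ) (r : Fin (n / 2 + 1)) :
    uMat (k := k) n i r * fMat (k := k) v n r
      = fMat (k := k) v n r * uMat (k := k) n (i + 2) r := by
  ext p q
  unfold fMat uMat
  rw [Matrix.mul_diagonal, Matrix.diagonal_mul]
  simp only [Matrix.of_apply, mul_ite, ite_mul, mul_one, mul_zero, one_mul, zero_mul]
  split_ifs <;> first | rfl | omega

/-- The map on generators. -/
def genMap : SchurGen → BAlg k n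
  | SchurGen.E => fun r => eMat v n r
  | SchurGen.F => fun r => fMat v n r
  | SchurGen.unit i => fun r => uMat (k := k) n i r

lemma hrel (hv : v ≠ 0) : ∀ ⦃x y : FreeAlgebra k SchurGen⦄, SchurRel k v n x y →
    (FreeAlgebra.lift k (genMap v n)) x = (FreeAlgebra.lift k (genMap v n)) y := by
  intro x y h
  induction h with
  | idem i hi j hj =>
      rw [map_mul, apply_ite (FreeAlgebra.lift k (genMap v n)), map_zero]
      simp only [FreeAlgebra.lift_ι_apply, genMap]
      funext r
      by_cases hij : i = j
      · subst hij
        simp only [if_pos rfl, Pi.mul_apply]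
        rw [mm1]
        simp
      · simp only [if_neg hij, Pi.mul_apply]
        rw [mm1, if_neg hij]
        rfl
  | sum_one =>
      rw [map_sum, map_one]
      simp only [FreeAlgebra.lift_ι_apply, genMap]
      funext r
      rw [Finset.sum_apply]
      exact mm2 n r
  | unit_zero i hi =>
      rw [map_zero]
      simp only [FreeAlgebra.lift_ι_apply, genMap]
      funext r
      exact mm3 n hi r
  | comm =>
      rw [map_sub, map_mul, map_mul, map_sum]
      simp only [map_smul, FreeAlgebra.lift_ι_apply, genMap]
      funext r
      rw [Pi.sub_apply, Pi.mul_apply, Pi.mul_apply, Finset.sum_apply]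
      have : ∀ i ∈ Xset n, (qint v i • fun r => uMat (k := k) n i r) r
          = qint v i • uMat (k := k) n i r := fun i _ => rfl
      rw [Finset.sum_congr rfl this]
      exact mm4 v n hv r
  | Eu i =>
      rw [map_mul, map_mul]
      simp only [FreeAlgebra.lift_ι_apply, genMap]
      funext r
      exact mm5 v n i r
  | Fu i =>
      rw [map_mul, map_mul]
      simp only [FreeAlgebra.lift_ι_apply, genMap]
      funext r
      exact mm6 v n i r
  | uE i =>
      rw [map_mul, map_mul]
      simp only [FreeAlgebra.lift_ι_apply, genMap]
      funext r
      exact mm7 v n i r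
  | uF i =>
      rw [map_mul, map_mul]
      simp only [FreeAlgebra.lift_ι_apply, genMap]
      funext r
      exact mm8 v n i r

/-- The homomorphism realizing `S(n)` on the direct sum of the simple modules. -/
noncomputable def phi (hv : v ≠ 0) : SchurAlg k v n →ₐ[k] BAlg k n :=
  RingQuot.liftAlgHom k ⟨FreeAlgebra.lift k (genMap v n), hrel v n hv⟩

lemma phi_SE (hv : v ≠ 0) : phi v n hv (SE k v n) = fun r => eMat v n r := by
  unfold phi SE
  rw [RingQuot.liftAlgHom_mkAlgHom_apply, FreeAlgebra.lift_ι_apply]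
  rfl

lemma phi_SF (hv : v ≠ 0) : phi v n hv (SF k v n) = fun r => fMat v n r := by
  unfold phi SF
  rw [RingQuot.liftAlgHom_mkAlgHom_apply, FreeAlgebra.lift_ι_apply]
  rfl

lemma phi_Sunit (hv : v ≠ 0) (i : ℤ) :
    phi v n hv (Sunit k v n i) = fun r => uMat (k := k) n i r := by
  unfold phi Sunit
  rw [RingQuot.liftAlgHom_mkAlgHom_apply, FreeAlgebra.lift_ι_apply]
  rfl

end Rep

section Span

variable (k : Type*) [Field k] (v : k) (n : ℕ)

/-- The spanning set of monomials. -/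
def Sgen : Set (SchurAlg k v n) :=
  {x | ∃ s a b : ℕ, s + a + b ≤ n ∧
    x = SF k v n ^ a * Sunit k v n ((n : ℤ) - 2 * s) * SE k v n ^ b}

/-- Their span. -/
def NSpan : Submodule k (SchurAlg k v n) := Submodule.span k (Sgen k v n)

lemma mem_gen {s a b : ℕ} (h : s + a + b ≤ n) :
    SF k v n ^ a * Sunit k v n ((n : ℤ) - 2 * s) * SE k v n ^ b ∈ NSpan k v n :=
  Submodule.subset_span ⟨s, a, b, h, rfl⟩

lemma notinX {i : ℤ} (h : i < -(n : ℤ) ∨ (n : ℤ) < i) : i ∉ Xset n := by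
  simp only [Xset, Finset.mem_filter, Finset.mem_Icc]
  omega

/-- Straightening: `E` times a monomial. -/
lemma monE (a b : ℕ) (i : ℤ) :
    SE k v n * (SF k v n ^ a * Sunit k v n i * SE k v n ^ b)
      = SF k v n ^ a * Sunit k v n (i + 2) * SE k v n ^ (b + 1)
        + (∑ t ∈ Finset.range a, qint v (i - 2 * t)) •
            (SF k v n ^ (a - 1) * Sunit k v n i * SE k v n ^ b) := by
  cases a with
  | zero =>
      simp only [pow_zero, one_mul, Finset.range_zero, Finset.sum_empty, zero_smul, add_zero]
      rw [← mul_assoc, b_Eu, mul_assoc, ← pow_succ']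
  | succ a' =>
      have h := p_comm k v n a' i
      have step1 : SE k v n * (SF k v n ^ (a' + 1) * Sunit k v n i * SE k v n ^ b)
          = (SE k v n * (SF k v n ^ (a' + 1) * Sunit k v n i)) * SE k v n ^ b := by
        rw [← mul_assoc]
      rw [step1, h, add_mul, smul_mul_assoc]
      congr 1
      rw [mul_assoc (SF k v n ^ (a' + 1)), b_Eu, ← mul_assoc, ← mul_assoc, mul_assoc
        (SF k v n ^ (a' + 1) * Sunit k v n (i + 2)), ← pow_succ']

lemma closE : ∀ x ∈ NSpan k v n, SE k v n * x ∈ NSpan k v n := by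
  intro x hx
  induction hx using Submodule.span_induction with
  | mem x hxg =>
      obtain ⟨s, a, b, hle, rfl⟩ := hxg
      rw [monE]
      apply Submodule.add_mem
      · by_cases hs : s = 0
        · subst hs
          have : ((n : ℤ) - 2 * (0 : ℕ) + 2) ∉ Xset n := by
            apply notinX; right; push_cast; omega
          rw [b_uzero k v n this, mul_zero, zero_mul]
          exact Submodule.zero_mem _
        · obtain ⟨s', rfl⟩ : ∃ s', s = s' + 1 := ⟨s - 1, by omega⟩
          have harg : (n : ℤ) - 2 * ((s' + 1 : ℕ) : ℤ) + 2 = (n : ℤ) - 2 * (s' : ℕ) := by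
            push_cast; ring
          rw [harg]
          exact mem_gen k v n (by omega)
      · apply Submodule.smul_mem
        rcases Nat.eq_zero_or_pos a with ha | ha
        · subst ha
          simpa using mem_gen k v n (s := s) (a := 0) (b := b) (by omega)
        · exact mem_gen k v n (s := s) (a := a - 1) (b := b) (by omega)
  | zero => rw [mul_zero]; exact Submodule.zero_mem _
  | add x y _ _ hx hy => rw [mul_add]; exact Submodule.add_mem _ hx hy
  | smul c x _ hx => rw [mul_smul_comm]; exact Submodule.smul_mem _ c hx

lemma closU (l : ℤ) : ∀ x ∈ NSpan k v n, Sunit k v n l * x ∈ NSpan k v n := by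
  intro x hx
  induction hx using Submodule.span_induction with
  | mem x hxg =>
      obtain ⟨s, a, b, hle, rfl⟩ := hxg
      rw [← mul_assoc, ← mul_assoc, p_uF, mul_assoc (SF k v n ^ a), b_umul]
      split_ifs with h
      · rw [h]
        exact mem_gen k v n hle
      · rw [mul_zero, zero_mul]
        exact Submodule.zero_mem _
  | zero => rw [mul_zero]; exact Submodule.zero_mem _
  | add x y _ _ hx hy => rw [mul_add]; exact Submodule.add_mem _ hx hy
  | smul c x _ hx => rw [mul_smul_comm]; exact Submodule.smul_mem _ c hx

lemma hardF : ∀ b s a : ℕ, s + a + b = n →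
    SF k v n ^ (a + 1) * Sunit k v n ((n : ℤ) - 2 * s) * SE k v n ^ b ∈ NSpan k v n := by
  intro b
  induction b with
  | zero =>
      intro s a hsum
      rw [pow_zero, mul_one, p_Fu]
      have : ((n : ℤ) - 2 * s - 2 * ((a + 1 : ℕ) : ℤ)) ∉ Xset n := by
        apply notinX; left; push_cast; omega
      rw [b_uzero k v n this, zero_mul]
      exact Submodule.zero_mem _
  | succ b ih =>
      intro s a hsum
      have harg : (n : ℤ) - 2 * ((s + 1 : ℕ) : ℤ) = ((n : ℤ) - 2 * s) - 2 := by
        push_cast; ring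
      have hY : SF k v n ^ (a + 1) * Sunit k v n (((n : ℤ) - 2 * s) - 2) * SE k v n ^ b
          ∈ NSpan k v n := by
        rw [← harg]
        exact ih (s + 1) a (by omega)
      have hZ : SF k v n ^ a * Sunit k v n (((n : ℤ) - 2 * s) - 2) * SE k v n ^ b
          ∈ NSpan k v n := by
        rw [← harg]
        exact mem_gen k v n (by omega)
      have hme := monE k v n (a + 1) b (((n : ℤ) - 2 * s) - 2)
      have harg2 : ((n : ℤ) - 2 * s) - 2 + 2 = (n : ℤ) - 2 * s := by ring
      rw [harg2, Nat.add_sub_cancel] at hme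
      have : SF k v n ^ (a + 1) * Sunit k v n ((n : ℤ) - 2 * s) * SE k v n ^ (b + 1)
          = SE k v n * (SF k v n ^ (a + 1) * Sunit k v n (((n : ℤ) - 2 * s) - 2) * SE k v n ^ b)
            - (∑ t ∈ Finset.range (a + 1), qint v ((((n : ℤ) - 2 * s) - 2) - 2 * t)) •
              (SF k v n ^ a * Sunit k v n (((n : ℤ) - 2 * s) - 2) * SE k v n ^ b) := by
        rw [hme, add_sub_cancel_right]
      rw [this]
      exact Submodule.sub_mem _ (closE k v n _ hY) (Submodule.smul_mem _ _ hZ)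

lemma closF : ∀ x ∈ NSpan k v n, SF k v n * x ∈ NSpan k v n := by
  intro x hx
  induction hx using Submodule.span_induction with
  | mem x hxg =>
      obtain ⟨s, a, b, hle, rfl⟩ := hxg
      have : SF k v n * (SF k v n ^ a * Sunit k v n ((n : ℤ) - 2 * s) * SE k v n ^ b)
          = SF k v n ^ (a + 1) * Sunit k v n ((n : ℤ) - 2 * s) * SE k v n ^ b := by
        rw [← mul_assoc, ← mul_assoc, ← pow_succ']
      rw [this]
      rcases lt_or_eq_of_le hle with hlt | heq
      · exact mem_gen k v n (by omega)
      · exact hardF k v n b s a heq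
  | zero => rw [mul_zero]; exact Submodule.zero_mem _
  | add x y _ _ hx hy => rw [mul_add]; exact Submodule.add_mem _ hx hy
  | smul c x _ hx => rw [mul_smul_comm]; exact Submodule.smul_mem _ c hx

lemma closOne : (1 : SchurAlg k v n) ∈ NSpan k v n := by
  rw [← b_sum k v n]
  apply Submodule.sum_mem
  intro i hi
  simp only [Xset, Finset.mem_filter, Finset.mem_Icc] at hi
  obtain ⟨⟨h1, h2⟩, h3⟩ := hi
  have hs : ∃ s : ℕ, s ≤ n ∧ i = (n : ℤ) - 2 * s := by
    refine ⟨((n : ℤ) - i).toNat / 2, by omega, by omega⟩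
  obtain ⟨s, hsn, rfl⟩ := hs
  simpa using mem_gen k v n (s := s) (a := 0) (b := 0) (by omega)

lemma span_eq_top : NSpan k v n = ⊤ := by
  rw [eq_top_iff]
  intro x _
  obtain ⟨w, rfl⟩ := RingQuot.mkAlgHom_surjective k (SchurRel k v n) x
  have key : ∀ w : FreeAlgebra k SchurGen, ∀ y ∈ NSpan k v n,
      RingQuot.mkAlgHom k (SchurRel k v n) w * y ∈ NSpan k v n := by
    intro w
    refine FreeAlgebra.induction k SchurGen
      (motive := fun w => ∀ y ∈ NSpan k v n,
        RingQuot.mkAlgHom k (SchurRel k v n) w * y ∈ NSpan k v n) ?_ ?_ ?_ ?_ w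
    · intro r y hy
      rw [AlgHom.commutes, Algebra.algebraMap_eq_smul_one, smul_mul_assoc, one_mul]
      exact Submodule.smul_mem _ r hy
    · intro g y hy
      cases g with
      | E => exact closE k v n y hy
      | F => exact closF k v n y hy
      | unit i => exact closU k v n i y hy
    · intro u w hu hw y hy
      rw [map_mul, mul_assoc]
      exact hu _ (hw y hy)
    · intro u w hu hw y hy
      rw [map_add, add_mul]
      exact Submodule.add_mem _ (hu y hy) (hw y hy)
  have h1 : RingQuot.mkAlgHom k (SchurRel k v n) w
      = RingQuot.mkAlgHom k (SchurRel k v n) w * 1 := (mul_one _).symm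
  rw [h1]
  exact key w 1 (closOne k v n)

end Span

section Surj

variable {k : Type*} [Field k] (v : k) (n : ℕ)

lemma fMat_mul_std (r : Fin (n / 2 + 1)) (w q : Fin (n - 2 * r + 1))
    (hw : (w : ℕ) + 1 < n - 2 * r + 1) (c : k) :
    fMat v n r * Matrix.single w q c
      = Matrix.single (⟨(w : ℕ) + 1, hw⟩ : Fin (n - 2 * r + 1)) q
          (qintN v ((w : ℕ) + 1) * c) := by
  ext x y
  rw [Matrix.mul_apply]
  rw [Finset.sum_eq_single w
    (fun j _ hj => by
      simp only [Matrix.single, Matrix.of_apply]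
      rw [if_neg (fun hc => hj hc.1.symm), mul_zero])
    (fun h => absurd (Finset.mem_univ _) h)]
  simp only [fMat, Matrix.single, Matrix.of_apply, Fin.ext_iff, true_and, and_true]
  have hx := x.isLt
  split_ifs <;>
    first
      | rfl
      | omega
      | (rw [mul_zero])
      | (rw [zero_mul])
      | (exfalso; omega)
      | (congr 2 <;> omega)
      | (rw [mul_zero, zero_mul])

lemma std_mul_eMat (r : Fin (n / 2 + 1)) (p w : Fin (n - 2 * r + 1))
    (hw : (w : ℕ) + 1 < n - 2 * r + 1) (c : k) :
    Matrix.single p w c * eMat v n r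
      = Matrix.single p (⟨(w : ℕ) + 1, hw⟩ : Fin (n - 2 * r + 1))
          (c * qintN v (n - 2 * r - w)) := by
  ext x y
  rw [Matrix.mul_apply]
  rw [Finset.sum_eq_single w
    (fun j _ hj => by
      simp only [Matrix.single, Matrix.of_apply]
      rw [if_neg (fun hc => hj hc.2.symm), zero_mul])
    (fun h => absurd (Finset.mem_univ _) h)]
  simp only [eMat, Matrix.single, Matrix.of_apply, Fin.ext_iff, true_and, and_true]
  have hy := y.isLt
  split_ifs <;>
    first
      | rfl
      | omega
      | (rw [mul_zero])
      | (rw [zero_mul])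
      | (exfalso; omega)
      | (congr 2 <;> omega)

lemma fpow_std (r : Fin (n / 2 + 1)) (pw : ℕ) (hpw : pw < n - 2 * r + 1)
    (q : Fin (n - 2 * r + 1)) (c : k) :
    fMat v n r ^ pw * Matrix.single (⟨0, by omega⟩ : Fin (n - 2 * r + 1)) q c
      = Matrix.single (⟨pw, hpw⟩ : Fin (n - 2 * r + 1)) q (qfact v pw * c) := by
  induction pw with
  | zero =>
      rw [pow_zero, one_mul]
      congr 1
      simp [qfact]
  | succ pw ih =>
      have h' : pw < n - 2 * r + 1 := by omega
      rw [pow_succ', mul_assoc, ih h', fMat_mul_std v n r ⟨pw, h'⟩ q hpw]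
      have hco : qintN v (pw + 1) * (qfact v pw * c) = qfact v (pw + 1) * c := by
        unfold qfact
        rw [Finset.prod_range_succ]
        ring
      show Matrix.single (⟨pw + 1, hpw⟩ : Fin (n - 2 * r + 1)) q
        (qintN v (pw + 1) * (qfact v pw * c)) = _
      rw [hco]

lemma std_epow (r : Fin (n / 2 + 1)) (qw : ℕ) (hqw : qw < n - 2 * r + 1)
    (p : Fin (n - 2 * r + 1)) (c : k) :
    Matrix.single p (⟨0, by omega⟩ : Fin (n - 2 * r + 1)) c * eMat v n r ^ qw
      = Matrix.single p (⟨qw, hqw⟩ : Fin (n - 2 * r + 1))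
          (c * ∏ t ∈ Finset.range qw, qintN v (n - 2 * r - t)) := by
  induction qw with
  | zero =>
      rw [pow_zero, mul_one]
      congr 1
      simp
  | succ qw ih =>
      have h' : qw < n - 2 * r + 1 := by omega
      rw [pow_succ, ← mul_assoc, ih h', std_mul_eMat v n r p ⟨qw, h'⟩ hqw]
      have hco : (c * ∏ t ∈ Finset.range qw, qintN v (n - 2 * r - t))
          * qintN v (n - 2 * r - qw)
          = c * ∏ t ∈ Finset.range (qw + 1), qintN v (n - 2 * r - t) := by
        rw [Finset.prod_range_succ]
        ring
      show Matrix.single p (⟨qw + 1, hqw⟩ : Fin (n - 2 * r + 1))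
        ((c * ∏ t ∈ Finset.range qw, qintN v (n - 2 * r - t)) * qintN v (n - 2 * r - qw)) = _
      rw [hco]

lemma uMat_hi (r r' : Fin (n / 2 + 1)) (h : (r' : ℕ) < (r : ℕ)) :
    uMat (k := k) n ((n : ℤ) - 2 * (r' : ℕ)) r = 0 := by
  unfold uMat
  have : (fun q : Fin (n - 2 * r + 1) =>
      if (n : ℤ) - 2 * r - 2 * (q : ℕ) = (n : ℤ) - 2 * (r' : ℕ) then (1:k) else 0)
      = fun _ => 0 := by
    funext q
    rw [if_neg (by omega)]
  rw [this, Matrix.diagonal_zero]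

lemma uMat_lo (r r' : Fin (n / 2 + 1)) (h : (r : ℕ) ≤ (r' : ℕ))
    (hw : (r' : ℕ) - (r : ℕ) < n - 2 * r + 1) :
    uMat (k := k) n ((n : ℤ) - 2 * (r' : ℕ)) r
      = Matrix.single (⟨(r' : ℕ) - (r : ℕ), hw⟩ : Fin (n - 2 * r + 1))
          (⟨(r' : ℕ) - (r : ℕ), hw⟩ : Fin (n - 2 * r + 1)) 1 := by
  ext p q
  unfold uMat
  rw [Matrix.diagonal_apply]
  simp only [Matrix.single, Matrix.of_apply, Fin.ext_iff]
  have hp := p.isLt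
  have hq := q.isLt
  split_ifs <;> first | rfl | omega | (exfalso; omega)

lemma mul_single_mul (x y : BAlg k n) (r : Fin (n / 2 + 1))
    (A : Matrix (Fin (n - 2 * r + 1)) (Fin (n - 2 * r + 1)) k) :
    x * Pi.single r A * y = Pi.single r (x r * A * y r) := by
  funext r''
  by_cases h : r'' = r
  · subst h
    rw [Pi.mul_apply, Pi.mul_apply, Pi.single_eq_same, Pi.single_eq_same]
  · rw [Pi.mul_apply, Pi.mul_apply, Pi.single_eq_of_ne h, Pi.single_eq_of_ne h,
      mul_zero, zero_mul]

lemma single_std_mem (hv : v ≠ 0) (hq : qfact v n ≠ 0) (r' : Fin (n / 2 + 1))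
    (p q : Fin (n - 2 * r' + 1)) (c : k) :
    Pi.single r' (Matrix.single p q c) ∈ (phi v n hv).range := by
  -- strong induction on the block index
  suffices H : ∀ N : ℕ, ∀ r' : Fin (n / 2 + 1), (r' : ℕ) < N →
      ∀ (p q : Fin (n - 2 * r' + 1)) (c : k),
        Pi.single r' (Matrix.single p q c) ∈ (phi v n hv).range by
    exact H ((r' : ℕ) + 1) r' (by omega) p q c
  intro N
  induction N with
  | zero => exact fun r' h => absurd h (Nat.not_lt_zero _)
  | succ N IHN =>
  intro r' hr' p q c
  -- Step A : the corner idempotent of block r' is in the range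
  have hzlt : (0 : ℕ) < n - 2 * r' + 1 := by omega
  have hstepA : Pi.single r' (Matrix.single
      (⟨0, hzlt⟩ : Fin (n - 2 * r' + 1)) (⟨0, hzlt⟩ : Fin (n - 2 * r' + 1)) (1:k))
      ∈ (phi v n hv).range := by
    have hD : (fun r => uMat (k := k) n ((n : ℤ) - 2 * (r' : ℕ)) r) ∈ (phi v n hv).range :=
      ⟨Sunit k v n ((n : ℤ) - 2 * (r' : ℕ)), phi_Sunit v n hv _⟩
    have hkey : Pi.single r' (Matrix.single
        (⟨0, hzlt⟩ : Fin (n - 2 * r' + 1)) (⟨0, hzlt⟩ : Fin (n - 2 * r' + 1)) (1:k))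
        = (fun r => uMat (k := k) n ((n : ℤ) - 2 * (r' : ℕ)) r)
          - ∑ r ∈ Finset.univ.filter (fun r : Fin (n / 2 + 1) => (r : ℕ) < (r' : ℕ)),
              Pi.single r (uMat (k := k) n ((n : ℤ) - 2 * (r' : ℕ)) r) := by
      funext r''
      rw [Pi.sub_apply, Finset.sum_apply]
      by_cases h1 : r'' = r'
      · subst h1
        rw [Finset.sum_eq_zero (fun r hr => by
            simp only [Finset.mem_filter] at hr
            exact Pi.single_eq_of_ne (fun hc => by subst hc; omega) _),
          sub_zero, Pi.single_eq_same, uMat_lo n r'' r'' le_rfl (by omega)]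
        simp
      · rw [Pi.single_eq_of_ne h1]
        by_cases h2 : (r'' : ℕ) < (r' : ℕ)
        · have hmem : r'' ∈ Finset.univ.filter
              (fun r : Fin (n / 2 + 1) => (r : ℕ) < (r' : ℕ)) :=
            Finset.mem_filter.mpr ⟨Finset.mem_univ _, h2⟩
          have hsum := Finset.sum_eq_single_of_mem
            (f := fun r => (Pi.single (M := fun r : Fin (n / 2 + 1) =>
                Matrix (Fin (n - 2 * ↑r + 1)) (Fin (n - 2 * ↑r + 1)) k) r
                (uMat (k := k) n ((n : ℤ) - 2 * (r' : ℕ)) r) : BAlg k n) r'')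
            r'' hmem (fun b _ hb => Pi.single_eq_of_ne (fun hc => hb hc.symm) _)
          rw [hsum]
          simp
        · have h3 : (r' : ℕ) < (r'' : ℕ) := by
            rcases Nat.lt_or_ge (r' : ℕ) (r'' : ℕ) with h | h
            · exact h
            · exact absurd (Fin.ext (show (r'' : ℕ) = (r' : ℕ) by omega)) h1
          rw [Finset.sum_eq_zero (fun r hr => by
              simp only [Finset.mem_filter] at hr
              exact Pi.single_eq_of_ne (fun hc => by subst hc; omega) _),
            sub_zero, uMat_hi n r'' r' h3]
    rw [hkey]
    apply Subalgebra.sub_mem _ hD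
    apply Subalgebra.sum_mem
    intro r hr
    simp only [Finset.mem_filter] at hr
    have hle : (r : ℕ) ≤ (r' : ℕ) := le_of_lt hr.2
    have hw : (r' : ℕ) - (r : ℕ) < n - 2 * r + 1 := by
      have := r'.isLt
      omega
    rw [uMat_lo n r r' hle hw]
    exact IHN r (by omega) _ _ _
  -- Step B : multiply by powers of F and E
  have hp := p.isLt
  have hq' := q.isLt
  have hF : phi v n hv (SF k v n ^ (p : ℕ)) = (fun r => fMat v n r) ^ (p : ℕ) := by
    rw [map_pow, phi_SF]
  have hE : phi v n hv (SE k v n ^ (q : ℕ)) = (fun r => eMat v n r) ^ (q : ℕ) := by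
    rw [map_pow, phi_SE]
  have hmul : phi v n hv (SF k v n ^ (p : ℕ)) * Pi.single r' (Matrix.single
      (⟨0, hzlt⟩ : Fin (n - 2 * r' + 1)) (⟨0, hzlt⟩ : Fin (n - 2 * r' + 1)) (1:k))
        * phi v n hv (SE k v n ^ (q : ℕ))
      = Pi.single r' (Matrix.single p q
          (qfact v (p : ℕ) * 1 * ∏ t ∈ Finset.range (q : ℕ), qintN v (n - 2 * r' - t))) := by
    rw [hF, hE, mul_single_mul]
    congr 1
    rw [Pi.pow_apply, Pi.pow_apply]
    rw [fpow_std v n r' (p : ℕ) p.isLt, std_epow v n r' (q : ℕ) q.isLt]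
  have hd : (qfact v (p : ℕ) * 1 * ∏ t ∈ Finset.range (q : ℕ), qintN v (n - 2 * r' - t)) ≠ 0 := by
    have hr' := r'.isLt
    apply mul_ne_zero
    · rw [mul_one]
      unfold qfact
      rw [Finset.prod_ne_zero_iff]
      intro j hj
      simp only [Finset.mem_range] at hj
      exact qintN_ne_zero hq (by omega) (by omega)
    · rw [Finset.prod_ne_zero_iff]
      intro t ht
      simp only [Finset.mem_range] at ht
      exact qintN_ne_zero hq (by omega) (by omega)
  have hfinal : Pi.single r' (Matrix.single p q c)
      = (c * (qfact v (p : ℕ) * 1 * ∏ t ∈ Finset.range (q : ℕ), qintN v (n - 2 * r' - t))⁻¹)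
        • (Pi.single r' (Matrix.single p q
            (qfact v (p : ℕ) * 1 * ∏ t ∈ Finset.range (q : ℕ), qintN v (n - 2 * r' - t)))
            : BAlg k n) := by
    rw [← Pi.single_smul, Matrix.smul_single]
    congr 1
    rw [smul_eq_mul]
    field_simp
    have hd' : (qfact v (p : ℕ) * ∏ t ∈ Finset.range (q : ℕ), qintN v (n - 2 * r' - t)) ≠ 0 := by
      simpa using hd
    rw [mul_assoc c, mul_div_assoc, div_self hd', mul_one]
  rw [hfinal]
  apply Subalgebra.smul_mem
  rw [← hmul]
  exact Subalgebra.mul_mem _ (Subalgebra.mul_mem _ (AlgHom.mem_range_self _ _) hstepA)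
    (AlgHom.mem_range_self _ _)

lemma pi_single_sum (r : Fin (n / 2 + 1)) {α : Type*} (s : Finset α)
    (f : α → Matrix (Fin (n - 2 * r + 1)) (Fin (n - 2 * r + 1)) k) :
    (Pi.single (M := fun r' : Fin (n / 2 + 1) =>
        Matrix (Fin (n - 2 * r' + 1)) (Fin (n - 2 * r' + 1)) k) r (∑ a ∈ s, f a))
      = ∑ a ∈ s, Pi.single r (f a) :=
  map_sum (AddMonoidHom.single (fun r' : Fin (n / 2 + 1) =>
    Matrix (Fin (n - 2 * r' + 1)) (Fin (n - 2 * r' + 1)) k) r) f s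

lemma phi_surjective (hv : v ≠ 0) (hq : qfact v n ≠ 0) :
    Function.Surjective (phi v n hv) := by
  rw [← AlgHom.range_eq_top]
  rw [eq_top_iff]
  intro x _
  have hx : x = ∑ r : Fin (n / 2 + 1), Pi.single r (x r) := (Finset.univ_sum_single x).symm
  rw [hx]
  apply Subalgebra.sum_mem
  intro r _
  have hxr : x r = ∑ i : Fin (n - 2 * r + 1), ∑ j : Fin (n - 2 * r + 1),
      Matrix.single i j (x r i j) := Matrix.matrix_eq_sum_single (x r)
  rw [hxr, pi_single_sum n r]
  apply Subalgebra.sum_mem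
  intro i _
  rw [pi_single_sum n r]
  apply Subalgebra.sum_mem
  intro j _
  exact single_std_mem v n hv hq r i j _

end Surj

section Final

variable {k : Type*} [Field k] (v : k) (n : ℕ)

/-- Index type with exactly `dim B` elements. -/
abbrev Jidx (n : ℕ) := Σ r : Fin (n / 2 + 1), Fin (n - 2 * r + 1) × Fin (n - 2 * r + 1)

/-- The spanning family reindexed by `Jidx`. -/
noncomputable def xfam (k : Type*) [Field k] (v : k) (n : ℕ) : Jidx n → SchurAlg k v n :=
  fun j => SF k v n ^ ((j.1 : ℕ) + ((j.2.1 : ℕ) - (j.2.2 : ℕ)))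
    * Sunit k v n ((n : ℤ) - 2 * (min (j.2.1 : ℕ) (j.2.2 : ℕ)))
    * SE k v n ^ ((j.1 : ℕ) + ((j.2.2 : ℕ) - (j.2.1 : ℕ)))

lemma sgen_sub_range : Sgen k v n ⊆ Set.range (xfam k v n) := by
  rintro x ⟨s, a, b, hle, rfl⟩
  have h1 : min a b < n / 2 + 1 := by omega
  have h2 : s + (a - b) < n - 2 * (min a b) + 1 := by omega
  have h3 : s + (b - a) < n - 2 * (min a b) + 1 := by omega
  refine ⟨⟨⟨min a b, h1⟩, (⟨s + (a - b), h2⟩, ⟨s + (b - a), h3⟩)⟩, ?_⟩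
  unfold xfam
  have e1 : (min a b) + ((s + (a - b)) - (s + (b - a))) = a := by omega
  have e2 : min (s + (a - b)) (s + (b - a)) = s := by omega
  have e3 : (min a b) + ((s + (b - a)) - (s + (a - b))) = b := by omega
  show SF k v n ^ ((min a b) + ((s + (a - b)) - (s + (b - a))))
      * Sunit k v n ((n : ℤ) - 2 * (min (s + (a - b)) (s + (b - a))))
      * SE k v n ^ ((min a b) + ((s + (b - a)) - (s + (a - b)))) = _
  rw [e1, e2, e3]

lemma span_xfam_top : Submodule.span k (Set.range (xfam k v n)) = ⊤ := by
  rw [eq_top_iff, ← span_eq_top k v n]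
  exact Submodule.span_mono (sgen_sub_range v n)

lemma schur_finite : Module.Finite k (SchurAlg k v n) := by
  classical
  refine ⟨⟨Finset.image (xfam k v n) Finset.univ, ?_⟩⟩
  rw [Finset.coe_image, Finset.coe_univ, Set.image_univ]
  exact span_xfam_top v n

lemma finrank_schur_le :
    Module.finrank k (SchurAlg k v n) ≤ Fintype.card (Jidx n) := by
  classical
  have h1 := finrank_span_le_card (R := k) (Set.range (xfam k v n))
  rw [span_xfam_top v n, finrank_top] at h1
  refine le_trans h1 ?_
  rw [Set.toFinset_range]
  exact le_trans (Finset.card_image_le) (by simp)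

lemma finrank_BAlg : Module.finrank k (BAlg k n) = Fintype.card (Jidx n) := by
  rw [Module.finrank_pi_fintype, Fintype.card_sigma]
  apply Finset.sum_congr rfl
  intro r _
  rw [Module.finrank_matrix, Module.finrank_self]
  simp

lemma phi_injective (hv : v ≠ 0) (hq : qfact v n ≠ 0) :
    Function.Injective (phi v n hv) := by
  haveI := schur_finite v n (k := k)
  have hsurj : Function.Surjective (phi v n hv) := phi_surjective v n hv hq
  have hrange : LinearMap.range (phi v n hv).toLinearMap = ⊤ :=
    LinearMap.range_eq_top.mpr hsurj
  have hrk := LinearMap.finrank_range_add_finrank_ker (phi v n hv).toLinearMap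
  rw [hrange, finrank_top, finrank_BAlg] at hrk
  have hle := finrank_schur_le v n (k := k)
  have hker : Module.finrank k (LinearMap.ker (phi v n hv).toLinearMap) = 0 := by omega
  have hbot : LinearMap.ker (phi v n hv).toLinearMap = ⊥ :=
    Submodule.finrank_eq_zero.mp hker
  exact LinearMap.ker_eq_bot.mp hbot

lemma schur_semisimple (hv : v ≠ 0) (hq : qfact v n ≠ 0) :
    IsSemisimpleRing (SchurAlg k v n) := by
  haveI : ∀ r : Fin (n / 2 + 1),
      IsSemisimpleRing (Matrix (Fin (n - 2 * r + 1)) (Fin (n - 2 * r + 1)) k) :=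
    fun r => matrix_isSemisimpleRing (k := k) (Fin (n - 2 * r + 1))
  haveI : IsSemisimpleRing (BAlg k n) := inferInstance
  have e : SchurAlg k v n ≃ₐ[k] BAlg k n :=
    AlgEquiv.ofBijective (phi v n hv) ⟨phi_injective v n hv hq, phi_surjective v n hv hq⟩
  exact RingEquiv.isSemisimpleRing e.symm.toRingEquiv

end Final

/-- if `[n]! ≠ 0` then the quantum Schur algebra `S(n)` is a
semisimple ring. -/
theorem stmt_4 (k : Type*) [Field k] (v : k) (hv : v ≠ 0) (n : ℕ)
    (hq : qfact v n ≠ 0) :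
    IsSemisimpleRing (SchurAlg k v n) := by
  exact schur_semisimple v n hv hq
end
end

section
/- For all integers r, s ≥ 0 there is a unique k-algebra morphism Δ : S(r+s) → S(r) ⊗_k S(s) such that Δ(E) = E ⊗ 1 + (Σ_{i ∈ X(r)} v^i 1_i) ⊗ E, Δ(F) = F ⊗ (Σ_{i ∈ X(s)} v^{−i} 1_i) + 1 ⊗ F, and Δ(1_i) = Σ_{i' + i'' = i} 1_{i'} ⊗ 1_{i''} for each i ∈ X(r+s), where the last sum is over i' ∈ X(r) and i'' ∈ X(s) with i' + i'' = i. -/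
noncomputable section

open scoped TensorProduct

variable (k : Type*) [Field k]

/-! ### Auxiliary lemmas on quantum integers -/

section AuxQint

variable {k₀ : Type*} [Field k₀] {v : k₀}

lemma qintN_mul_key (hv : v ≠ 0) (m : ℕ) :
    (v - v⁻¹) * qintN v m = v ^ (m : ℤ) - v ^ (-(m : ℤ)) := by
  rw [qintN, Finset.mul_sum]
  have hterm : ∀ t ∈ Finset.range m,
      (v - v⁻¹) * v ^ ((m : ℤ) - 1 - 2 * t) =
        (fun t : ℕ => v ^ ((m : ℤ) - 2 * t)) t -
          (fun t : ℕ => v ^ ((m : ℤ) - 2 * t)) (t + 1) := by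
    intro t _
    have e1 : v * v ^ ((m : ℤ) - 1 - 2 * t) = v ^ ((m : ℤ) - 2 * t) := by
      rw [← zpow_one_add₀ hv]
      congr 1
      ring
    have e2 : v⁻¹ * v ^ ((m : ℤ) - 1 - 2 * t) = v ^ ((m : ℤ) - 2 * ((t : ℕ) + 1 : ℕ)) := by
      rw [← zpow_neg_one, ← zpow_add₀ hv]
      congr 1
      push_cast
      ring
    simp only [sub_mul, e1, e2]
  rw [Finset.sum_congr rfl hterm, Finset.sum_range_sub']
  norm_num
  rw [show (m : ℤ) - 2 * (m : ℤ) = -(m : ℤ) by ring]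
  rw [zpow_neg, zpow_natCast]

lemma qint_mul_key (hv : v ≠ 0) (m : ℤ) :
    (v - v⁻¹) * qint v m = v ^ m - v ^ (-m) := by
  rw [qint]
  split_ifs with h
  · have := qintN_mul_key hv m.toNat
    rwa [Int.toNat_of_nonneg h] at this
  · have := qintN_mul_key hv (-m).toNat
    rw [Int.toNat_of_nonneg (by omega)] at this
    rw [mul_neg, this]
    ring_nf

lemma zpow_even_shift (hv : v ≠ 0) (hvv : v * v = 1) (e j : ℤ) :
    v ^ (e + 2 * j) = v ^ e := by
  have h2 : v ^ (2 : ℤ) = 1 := by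
    rw [show (2 : ℤ) = 1 + 1 by norm_num, zpow_add₀ hv, zpow_one, hvv]
  have hm2 : v ^ (-2 : ℤ) = 1 := by
    rw [zpow_neg, h2, inv_one]
  induction j using Int.induction_on with
  | zero => norm_num
  | succ n ih =>
      rw [show e + 2 * ((n : ℤ) + 1) = (e + 2 * n) + 2 by ring, zpow_add₀ hv, h2, mul_one, ih]
  | pred n ih =>
      rw [show e + 2 * (-(n : ℤ) - 1) = (e + 2 * (-n)) + (-2) by ring, zpow_add₀ hv, hm2,
        mul_one, ih]

lemma qintN_of_sq (hv : v ≠ 0) (hvv : v * v = 1) (m : ℕ) :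
    qintN v m = (m : k₀) * v ^ ((m : ℤ) - 1) := by
  rw [qintN]
  have hterm : ∀ t ∈ Finset.range m,
      v ^ ((m : ℤ) - 1 - 2 * t) = v ^ ((m : ℤ) - 1) := by
    intro t _
    rw [show (m : ℤ) - 1 - 2 * t = ((m : ℤ) - 1) + 2 * (-(t : ℤ)) by ring,
      zpow_even_shift hv hvv]
  rw [Finset.sum_congr rfl hterm, Finset.sum_const, Finset.card_range, nsmul_eq_mul]

lemma qint_of_sq (hv : v ≠ 0) (hvv : v * v = 1) (m : ℤ) :
    qint v m = (m : k₀) * v ^ (m - 1) := by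
  rw [qint]
  split_ifs with h
  · rw [qintN_of_sq hv hvv, Int.toNat_of_nonneg h]
    have hc : ((m.toNat : ℕ) : k₀) = ((m : ℤ) : k₀) := by
      exact_mod_cast congrArg (fun z : ℤ => (z : k₀)) (Int.toNat_of_nonneg h)
    rw [hc]
  · rw [qintN_of_sq hv hvv, Int.toNat_of_nonneg (by omega : (0:ℤ) ≤ -m)]
    rw [show -m - 1 = (m - 1) + 2 * (-m) by ring, zpow_even_shift hv hvv]
    have hc : (((-m).toNat : ℕ) : k₀) = ((-m : ℤ) : k₀) := by
      exact_mod_cast congrArg (fun z : ℤ => (z : k₀)) (Int.toNat_of_nonneg (by omega : (0:ℤ) ≤ -m))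
    rw [hc]
    push_cast
    ring

lemma qint_add (hv : v ≠ 0) (a b : ℤ) :
    qint v (a + b) = v ^ (-b) * qint v a + v ^ a * qint v b := by
  by_cases h : v - v⁻¹ = 0
  · have hvv : v * v = 1 := by
      rw [sub_eq_zero] at h
      nth_rewrite 2 [h]
      exact mul_inv_cancel₀ hv
    rw [qint_of_sq hv hvv, qint_of_sq hv hvv, qint_of_sq hv hvv]
    have e1 : v ^ (-b) * v ^ (a - 1) = v ^ (a + b - 1) := by
      rw [← zpow_add₀ hv, show -b + (a - 1) = (a + b - 1) + 2 * (-b) by ring,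
        zpow_even_shift hv hvv]
    have e2 : v ^ a * v ^ (b - 1) = v ^ (a + b - 1) := by
      rw [← zpow_add₀ hv]
      congr 1
      ring
    rw [show v ^ (-b) * ((a : k₀) * v ^ (a - 1)) = (a : k₀) * (v ^ (-b) * v ^ (a - 1)) by ring,
      show v ^ a * ((b : k₀) * v ^ (b - 1)) = (b : k₀) * (v ^ a * v ^ (b - 1)) by ring, e1, e2]
    push_cast
    ring
  · apply mul_left_cancel₀ h
    rw [qint_mul_key hv, mul_add,
      show (v - v⁻¹) * (v ^ (-b) * qint v a) = v ^ (-b) * ((v - v⁻¹) * qint v a) by ring,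
      show (v - v⁻¹) * (v ^ a * qint v b) = v ^ a * ((v - v⁻¹) * qint v b) by ring,
      qint_mul_key hv, qint_mul_key hv]
    have ea : v ^ (-a) = (v ^ a)⁻¹ := zpow_neg v a
    have eb : v ^ (-b) = (v ^ b)⁻¹ := zpow_neg v b
    have eab : v ^ (a + b) = v ^ a * v ^ b := zpow_add₀ hv a b
    have eab' : v ^ (-(a + b)) = (v ^ a * v ^ b)⁻¹ := by rw [zpow_neg, eab]
    rw [ea, eb, eab, eab']
    have ha : v ^ a ≠ 0 := zpow_ne_zero a hv
    have hb : v ^ b ≠ 0 := zpow_ne_zero b hv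
    field_simp
    ring

end AuxQint

/-! ### Auxiliary lemmas on `Xset` and shifted sums -/

section AuxShift

lemma Xset_add {r s : ℕ} {a b : ℤ} (ha : a ∈ Xset r) (hb : b ∈ Xset s) :
    a + b ∈ Xset (r + s) := by
  simp only [Xset, Finset.mem_filter, Finset.mem_Icc] at ha hb ⊢
  push_cast
  omega

variable {M : Type*} [AddCommMonoid M]

lemma sum_shift (n : ℕ) (d : ℤ) (g : ℤ → M)
    (h1 : ∀ j, j ∉ Xset n → g j = 0) (h2 : ∀ j, j - d ∉ Xset n → g j = 0) :
    ∑ i ∈ Xset n, g (i + d) = ∑ j ∈ Xset n, g j := by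
  have L : ∑ i ∈ (Xset n).filter (fun i => i + d ∈ Xset n), g (i + d)
      = ∑ i ∈ Xset n, g (i + d) :=
    Finset.sum_filter_of_ne (fun x _ hx => by
      by_contra hmem; exact hx (h1 _ hmem))
  have R : ∑ j ∈ (Xset n).filter (fun j => j - d ∈ Xset n), g j
      = ∑ j ∈ Xset n, g j :=
    Finset.sum_filter_of_ne (fun x _ hx => by
      by_contra hmem; exact hx (h2 _ hmem))
  rw [← L, ← R]
  refine Finset.sum_nbij' (fun i => i + d) (fun j => j - d) ?_ ?_ ?_ ?_ ?_
  · intro a ha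
    simp only [Finset.mem_filter] at ha ⊢
    exact ⟨ha.2, by simpa using ha.1⟩
  · intro a ha
    simp only [Finset.mem_filter] at ha ⊢
    exact ⟨ha.2, by simpa using ha.1⟩
  · intro a _; ring
  · intro a _; ring
  · intro a _; rfl

lemma sum_shift2 (r s : ℕ) (i d1 d2 : ℤ) (g : ℤ × ℤ → M)
    (h1 : ∀ q : ℤ × ℤ, q.1 ∉ Xset r → g q = 0)
    (h2 : ∀ q : ℤ × ℤ, q.2 ∉ Xset s → g q = 0)
    (h3 : ∀ q : ℤ × ℤ, q.1 - d1 ∉ Xset r → g q = 0)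
    (h4 : ∀ q : ℤ × ℤ, q.2 - d2 ∉ Xset s → g q = 0) :
    ∑ p ∈ (Xset r ×ˢ Xset s).filter (fun p => p.1 + p.2 = i), g (p.1 + d1, p.2 + d2)
      = ∑ q ∈ (Xset r ×ˢ Xset s).filter (fun q => q.1 + q.2 = i + d1 + d2), g q := by
  have L : ∑ p ∈ ((Xset r ×ˢ Xset s).filter (fun p => p.1 + p.2 = i)).filter
      (fun p => p.1 + d1 ∈ Xset r ∧ p.2 + d2 ∈ Xset s), g (p.1 + d1, p.2 + d2)
      = ∑ p ∈ (Xset r ×ˢ Xset s).filter (fun p => p.1 + p.2 = i), g (p.1 + d1, p.2 + d2) :=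
    Finset.sum_filter_of_ne (fun x _ hx => by
      by_contra hmem
      rcases not_and_or.mp hmem with h | h
      · exact hx (h1 _ h)
      · exact hx (h2 _ h))
  have R : ∑ q ∈ ((Xset r ×ˢ Xset s).filter (fun q => q.1 + q.2 = i + d1 + d2)).filter
      (fun q => q.1 - d1 ∈ Xset r ∧ q.2 - d2 ∈ Xset s), g q
      = ∑ q ∈ (Xset r ×ˢ Xset s).filter (fun q => q.1 + q.2 = i + d1 + d2), g q :=
    Finset.sum_filter_of_ne (fun x _ hx => by
      by_contra hmem
      rcases not_and_or.mp hmem with h | h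
      · exact hx (h3 _ h)
      · exact hx (h4 _ h))
  rw [← L, ← R]
  refine Finset.sum_nbij' (fun p => (p.1 + d1, p.2 + d2)) (fun q => (q.1 - d1, q.2 - d2))
    ?_ ?_ ?_ ?_ ?_
  · intro a ha
    simp only [Finset.mem_filter, Finset.mem_product] at ha ⊢
    obtain ⟨⟨⟨ha1, ha2⟩, hsum⟩, hb1, hb2⟩ := ha
    exact ⟨⟨⟨hb1, hb2⟩, by omega⟩, by simpa using ha1, by simpa using ha2⟩
  · intro a ha
    simp only [Finset.mem_filter, Finset.mem_product] at ha ⊢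
    obtain ⟨⟨⟨ha1, ha2⟩, hsum⟩, hb1, hb2⟩ := ha
    exact ⟨⟨⟨hb1, hb2⟩, by omega⟩, by simpa using ha1, by simpa using ha2⟩
  · intro a _
    ext <;> simp
  · intro a _
    ext <;> simp
  · intro a _; rfl

end AuxShift

/-! ### Basic lemmas in the Schur algebra -/

section AuxSchur

variable {k₁ : Type*} [Field k₁] (v : k₁) (n : ℕ)

lemma Sunit_zero {i : ℤ} (hi : i ∉ Xset n) : Sunit k₁ v n i = 0 := by
  have h := RingQuot.mkAlgHom_rel k₁ (SchurRel.unit_zero (v := v) (n := n) i hi)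
  rw [map_zero] at h
  exact h

lemma Sunit_mul (i j : ℤ) :
    Sunit k₁ v n i * Sunit k₁ v n j = if i = j then Sunit k₁ v n i else 0 := by
  by_cases hi : i ∈ Xset n
  · by_cases hj : j ∈ Xset n
    · have h := RingQuot.mkAlgHom_rel k₁ (SchurRel.idem (v := v) (n := n) i hi j hj)
      rw [map_mul, apply_ite (RingQuot.mkAlgHom k₁ (SchurRel k₁ v n)), map_zero] at h
      exact h
    · have hij : i ≠ j := fun h => hj (h ▸ hi)
      rw [Sunit_zero v n hj, mul_zero, if_neg hij]
  · rw [Sunit_zero v n hi, zero_mul]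
    split_ifs <;> rfl

lemma Sunit_sum : ∑ i ∈ Xset n, Sunit k₁ v n i = 1 := by
  have h := RingQuot.mkAlgHom_rel k₁ (SchurRel.sum_one (v := v) (n := n))
  rw [map_sum, map_one] at h
  exact h

lemma SEF_comm : SE k₁ v n * SF k₁ v n - SF k₁ v n * SE k₁ v n
    = ∑ i ∈ Xset n, qint v i • Sunit k₁ v n i := by
  have h := RingQuot.mkAlgHom_rel k₁ (SchurRel.comm (v := v) (n := n))
  simp only [map_sub, map_mul, map_sum, map_smul] at h
  exact h

lemma SE_unit (i : ℤ) :
    SE k₁ v n * Sunit k₁ v n i = Sunit k₁ v n (i + 2) * SE k₁ v n := by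
  have h := RingQuot.mkAlgHom_rel k₁ (SchurRel.Eu (v := v) (n := n) i)
  rw [map_mul, map_mul] at h
  exact h

lemma SF_unit (i : ℤ) :
    SF k₁ v n * Sunit k₁ v n i = Sunit k₁ v n (i - 2) * SF k₁ v n := by
  have h := RingQuot.mkAlgHom_rel k₁ (SchurRel.Fu (v := v) (n := n) i)
  rw [map_mul, map_mul] at h
  exact h

lemma Sunit_SE (i : ℤ) :
    Sunit k₁ v n i * SE k₁ v n = SE k₁ v n * Sunit k₁ v n (i - 2) := by
  have h := RingQuot.mkAlgHom_rel k₁ (SchurRel.uE (v := v) (n := n) i)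
  rw [map_mul, map_mul] at h
  exact h

lemma Sunit_SF (i : ℤ) :
    Sunit k₁ v n i * SF k₁ v n = SF k₁ v n * Sunit k₁ v n (i + 2) := by
  have h := RingQuot.mkAlgHom_rel k₁ (SchurRel.uF (v := v) (n := n) i)
  rw [map_mul, map_mul] at h
  exact h

lemma Ksum_mul_unit (c : ℤ → k₁) (j : ℤ) :
    (∑ i ∈ Xset n, c i • Sunit k₁ v n i) * Sunit k₁ v n j = c j • Sunit k₁ v n j := by
  rw [Finset.sum_mul]
  simp only [smul_mul_assoc, Sunit_mul v n, smul_ite, smul_zero]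
  rw [Finset.sum_ite_eq' (Xset n) j (fun i => c i • Sunit k₁ v n i)]
  split_ifs with h
  · rfl
  · rw [Sunit_zero v n h, smul_zero]

lemma unit_mul_Ksum (c : ℤ → k₁) (j : ℤ) :
    Sunit k₁ v n j * (∑ i ∈ Xset n, c i • Sunit k₁ v n i) = c j • Sunit k₁ v n j := by
  rw [Finset.mul_sum]
  simp only [mul_smul_comm, Sunit_mul v n j, smul_ite, smul_zero]
  rw [Finset.sum_ite_eq (Xset n) j (fun i => c i • Sunit k₁ v n j)]
  split_ifs with h
  · rfl
  · rw [Sunit_zero v n h, smul_zero]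

lemma Ksum_mul_SF (c : ℤ → k₁) :
    (∑ i ∈ Xset n, c i • Sunit k₁ v n i) * SF k₁ v n
      = SF k₁ v n * (∑ i ∈ Xset n, c (i - 2) • Sunit k₁ v n i) := by
  have key := sum_shift n 2 (fun j => c (j - 2) • (SF k₁ v n * Sunit k₁ v n j))
    (fun j hj => by
      show c (j - 2) • (SF k₁ v n * Sunit k₁ v n j) = 0
      rw [Sunit_zero v n hj, mul_zero, smul_zero])
    (fun j hj => by
      show c (j - 2) • (SF k₁ v n * Sunit k₁ v n j) = 0
      rw [SF_unit, Sunit_zero v n hj, zero_mul, smul_zero])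
  simp only [add_sub_cancel_right] at key
  calc (∑ i ∈ Xset n, c i • Sunit k₁ v n i) * SF k₁ v n
      = ∑ i ∈ Xset n, c i • (Sunit k₁ v n i * SF k₁ v n) := by
        rw [Finset.sum_mul]; simp only [smul_mul_assoc]
    _ = ∑ i ∈ Xset n, c i • (SF k₁ v n * Sunit k₁ v n (i + 2)) := by
        simp only [Sunit_SF]
    _ = ∑ j ∈ Xset n, c (j - 2) • (SF k₁ v n * Sunit k₁ v n j) := key
    _ = SF k₁ v n * (∑ i ∈ Xset n, c (i - 2) • Sunit k₁ v n i) := by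
        rw [Finset.mul_sum]; simp only [mul_smul_comm]

lemma Ksum_mul_SE (c : ℤ → k₁) :
    (∑ i ∈ Xset n, c i • Sunit k₁ v n i) * SE k₁ v n
      = SE k₁ v n * (∑ i ∈ Xset n, c (i + 2) • Sunit k₁ v n i) := by
  have key := sum_shift n (-2) (fun j => c (j + 2) • (SE k₁ v n * Sunit k₁ v n j))
    (fun j hj => by
      show c (j + 2) • (SE k₁ v n * Sunit k₁ v n j) = 0
      rw [Sunit_zero v n hj, mul_zero, smul_zero])
    (fun j hj => by
      show c (j + 2) • (SE k₁ v n * Sunit k₁ v n j) = 0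
      rw [SE_unit, Sunit_zero v n (by simpa [sub_eq_add_neg] using hj), zero_mul, smul_zero])
  simp only [show ∀ i : ℤ, i + -2 + 2 = i from fun i => by ring] at key
  calc (∑ i ∈ Xset n, c i • Sunit k₁ v n i) * SE k₁ v n
      = ∑ i ∈ Xset n, c i • (Sunit k₁ v n i * SE k₁ v n) := by
        rw [Finset.sum_mul]; simp only [smul_mul_assoc]
    _ = ∑ i ∈ Xset n, c i • (SE k₁ v n * Sunit k₁ v n (i - 2)) := by
        simp only [Sunit_SE]
    _ = ∑ i ∈ Xset n, c i • (SE k₁ v n * Sunit k₁ v n (i + -2)) := by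
        simp only [sub_eq_add_neg]
    _ = ∑ j ∈ Xset n, c (j + 2) • (SE k₁ v n * Sunit k₁ v n j) := key
    _ = SE k₁ v n * (∑ i ∈ Xset n, c (i + 2) • Sunit k₁ v n i) := by
        rw [Finset.mul_sum]; simp only [mul_smul_comm]

end AuxSchur

/-! ### The comultiplication on generators, and verification of the relations -/

section AuxTensor

variable {k₂ : Type*} [Field k₂] (v : k₂) (r s : ℕ)

/-- Image of `1_i` under the comultiplication. -/
def Uh (i : ℤ) : SchurAlg k₂ v r ⊗[k₂] SchurAlg k₂ v s :=
  ∑ p ∈ (Xset r ×ˢ Xset s).filter (fun p => p.1 + p.2 = i),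
    Sunit k₂ v r p.1 ⊗ₜ[k₂] Sunit k₂ v s p.2

/-- Image of `E` under the comultiplication. -/
def Eh : SchurAlg k₂ v r ⊗[k₂] SchurAlg k₂ v s :=
  SE k₂ v r ⊗ₜ[k₂] 1 + (∑ i ∈ Xset r, v ^ i • Sunit k₂ v r i) ⊗ₜ[k₂] SE k₂ v s

/-- Image of `F` under the comultiplication. -/
def Fh : SchurAlg k₂ v r ⊗[k₂] SchurAlg k₂ v s :=
  SF k₂ v r ⊗ₜ[k₂] (∑ i ∈ Xset s, v ^ (-i) • Sunit k₂ v s i) + 1 ⊗ₜ[k₂] SF k₂ v s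

lemma Uh_zero {i : ℤ} (hi : i ∉ Xset (r + s)) : Uh v r s i = 0 := by
  rw [Uh]
  have hempty : (Xset r ×ˢ Xset s).filter (fun p => p.1 + p.2 = i) = ∅ := by
    rw [Finset.eq_empty_iff_forall_notMem]
    intro p hp
    simp only [Finset.mem_filter, Finset.mem_product] at hp
    exact hi (hp.2 ▸ Xset_add hp.1.1 hp.1.2)
  rw [hempty, Finset.sum_empty]

lemma Uh_mul (i j : ℤ) :
    Uh v r s i * Uh v r s j = if i = j then Uh v r s i else 0 := by
  simp only [Uh, Finset.sum_mul_sum]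
  have term : ∀ p q : ℤ × ℤ,
      (Sunit k₂ v r p.1 ⊗ₜ[k₂] Sunit k₂ v s p.2) * (Sunit k₂ v r q.1 ⊗ₜ[k₂] Sunit k₂ v s q.2)
        = if p = q then Sunit k₂ v r p.1 ⊗ₜ[k₂] Sunit k₂ v s p.2 else 0 := by
    intro p q
    rw [Algebra.TensorProduct.tmul_mul_tmul, Sunit_mul, Sunit_mul]
    by_cases h1 : p.1 = q.1 <;> by_cases h2 : p.2 = q.2 <;>
      simp [h1, h2, Prod.ext_iff, TensorProduct.tmul_zero, TensorProduct.zero_tmul]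
  simp only [term, Finset.sum_ite_eq]
  by_cases hij : i = j
  · subst hij
    rw [if_pos rfl]
    refine Finset.sum_congr rfl fun p hp => ?_
    rw [if_pos hp]
  · rw [if_neg hij]
    refine Finset.sum_eq_zero fun p hp => ?_
    rw [if_neg]
    intro hmem
    simp only [Finset.mem_filter] at hp hmem
    exact hij (hp.2.symm.trans hmem.2)

lemma Uh_sum : ∑ i ∈ Xset (r + s), Uh v r s i = 1 := by
  simp only [Uh]
  rw [Finset.sum_fiberwise_of_maps_to (g := fun p : ℤ × ℤ => p.1 + p.2)
    (fun p hp => by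
      have hm := Finset.mem_product.mp hp
      exact Xset_add hm.1 hm.2)
    (fun p : ℤ × ℤ => Sunit k₂ v r p.1 ⊗ₜ[k₂] Sunit k₂ v s p.2)]
  rw [Finset.sum_product]
  have inner : ∀ a : ℤ, ∑ b ∈ Xset s, Sunit k₂ v r a ⊗ₜ[k₂] Sunit k₂ v s b
      = Sunit k₂ v r a ⊗ₜ[k₂] (1 : SchurAlg k₂ v s) := by
    intro a
    rw [← TensorProduct.tmul_sum, Sunit_sum]
  rw [Finset.sum_congr rfl fun a _ => inner a, ← TensorProduct.sum_tmul, Sunit_sum,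
    Algebra.TensorProduct.one_def]

lemma Eh_Uh (i : ℤ) : Eh v r s * Uh v r s i = Uh v r s (i + 2) * Eh v r s := by
  have key1 := sum_shift2 r s i 2 0
    (fun q : ℤ × ℤ => (Sunit k₂ v r q.1 * SE k₂ v r) ⊗ₜ[k₂] Sunit k₂ v s q.2)
    (fun q hq => by
      show (Sunit k₂ v r q.1 * SE k₂ v r) ⊗ₜ[k₂] Sunit k₂ v s q.2 = 0
      rw [Sunit_zero v r hq, zero_mul, TensorProduct.zero_tmul])
    (fun q hq => by
      show (Sunit k₂ v r q.1 * SE k₂ v r) ⊗ₜ[k₂] Sunit k₂ v s q.2 = 0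
      rw [Sunit_zero v s hq, TensorProduct.tmul_zero])
    (fun q hq => by
      show (Sunit k₂ v r q.1 * SE k₂ v r) ⊗ₜ[k₂] Sunit k₂ v s q.2 = 0
      rw [Sunit_SE, Sunit_zero v r hq, mul_zero, TensorProduct.zero_tmul])
    (fun q hq => by
      show (Sunit k₂ v r q.1 * SE k₂ v r) ⊗ₜ[k₂] Sunit k₂ v s q.2 = 0
      rw [Sunit_zero v s (by simpa using hq), TensorProduct.tmul_zero])
  have key2 := sum_shift2 r s i 0 2
    (fun q : ℤ × ℤ => (v ^ q.1 • Sunit k₂ v r q.1) ⊗ₜ[k₂] (Sunit k₂ v s q.2 * SE k₂ v s))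
    (fun q hq => by
      show (v ^ q.1 • Sunit k₂ v r q.1) ⊗ₜ[k₂] (Sunit k₂ v s q.2 * SE k₂ v s) = 0
      rw [Sunit_zero v r hq, smul_zero, TensorProduct.zero_tmul])
    (fun q hq => by
      show (v ^ q.1 • Sunit k₂ v r q.1) ⊗ₜ[k₂] (Sunit k₂ v s q.2 * SE k₂ v s) = 0
      rw [Sunit_zero v s hq, zero_mul, TensorProduct.tmul_zero])
    (fun q hq => by
      show (v ^ q.1 • Sunit k₂ v r q.1) ⊗ₜ[k₂] (Sunit k₂ v s q.2 * SE k₂ v s) = 0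
      rw [Sunit_zero v r (by simpa using hq), smul_zero, TensorProduct.zero_tmul])
    (fun q hq => by
      show (v ^ q.1 • Sunit k₂ v r q.1) ⊗ₜ[k₂] (Sunit k₂ v s q.2 * SE k₂ v s) = 0
      rw [Sunit_SE, Sunit_zero v s hq, mul_zero, TensorProduct.tmul_zero])
  simp only [add_zero] at key1
  simp only [add_zero, zero_add] at key2
  rw [Eh, Uh, Uh, add_mul, mul_add, Finset.mul_sum, Finset.mul_sum, Finset.sum_mul,
    Finset.sum_mul]
  congr 1
  · calc ∑ p ∈ (Xset r ×ˢ Xset s).filter (fun p => p.1 + p.2 = i),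
        (SE k₂ v r ⊗ₜ[k₂] (1 : SchurAlg k₂ v s)) * (Sunit k₂ v r p.1 ⊗ₜ[k₂] Sunit k₂ v s p.2)
        = ∑ p ∈ (Xset r ×ˢ Xset s).filter (fun p => p.1 + p.2 = i),
            (Sunit k₂ v r (p.1 + 2) * SE k₂ v r) ⊗ₜ[k₂] Sunit k₂ v s p.2 := by
          refine Finset.sum_congr rfl fun p _ => ?_
          rw [Algebra.TensorProduct.tmul_mul_tmul, one_mul, SE_unit]
      _ = ∑ q ∈ (Xset r ×ˢ Xset s).filter (fun q => q.1 + q.2 = i + 2),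
            (Sunit k₂ v r q.1 * SE k₂ v r) ⊗ₜ[k₂] Sunit k₂ v s q.2 := key1
      _ = ∑ q ∈ (Xset r ×ˢ Xset s).filter (fun q => q.1 + q.2 = i + 2),
            (Sunit k₂ v r q.1 ⊗ₜ[k₂] Sunit k₂ v s q.2) *
              (SE k₂ v r ⊗ₜ[k₂] (1 : SchurAlg k₂ v s)) := by
          refine Finset.sum_congr rfl fun q _ => ?_
          rw [Algebra.TensorProduct.tmul_mul_tmul, mul_one]
  · calc ∑ p ∈ (Xset r ×ˢ Xset s).filter (fun p => p.1 + p.2 = i),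
        ((∑ a ∈ Xset r, v ^ a • Sunit k₂ v r a) ⊗ₜ[k₂] SE k₂ v s) *
          (Sunit k₂ v r p.1 ⊗ₜ[k₂] Sunit k₂ v s p.2)
        = ∑ p ∈ (Xset r ×ˢ Xset s).filter (fun p => p.1 + p.2 = i),
            (v ^ p.1 • Sunit k₂ v r p.1) ⊗ₜ[k₂] (Sunit k₂ v s (p.2 + 2) * SE k₂ v s) := by
          refine Finset.sum_congr rfl fun p _ => ?_
          rw [Algebra.TensorProduct.tmul_mul_tmul, Ksum_mul_unit v r (fun a => v ^ a), SE_unit]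
      _ = ∑ q ∈ (Xset r ×ˢ Xset s).filter (fun q => q.1 + q.2 = i + 2),
            (v ^ q.1 • Sunit k₂ v r q.1) ⊗ₜ[k₂] (Sunit k₂ v s q.2 * SE k₂ v s) := key2
      _ = ∑ q ∈ (Xset r ×ˢ Xset s).filter (fun q => q.1 + q.2 = i + 2),
            (Sunit k₂ v r q.1 ⊗ₜ[k₂] Sunit k₂ v s q.2) *
              ((∑ a ∈ Xset r, v ^ a • Sunit k₂ v r a) ⊗ₜ[k₂] SE k₂ v s) := by
          refine Finset.sum_congr rfl fun q _ => ?_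
          rw [Algebra.TensorProduct.tmul_mul_tmul, unit_mul_Ksum v r (fun a => v ^ a)]

lemma Fh_Uh (i : ℤ) : Fh v r s * Uh v r s i = Uh v r s (i - 2) * Fh v r s := by
  have key1 := sum_shift2 r s i (-2) 0
    (fun q : ℤ × ℤ => (Sunit k₂ v r q.1 * SF k₂ v r) ⊗ₜ[k₂] (v ^ (-q.2) • Sunit k₂ v s q.2))
    (fun q hq => by
      show (Sunit k₂ v r q.1 * SF k₂ v r) ⊗ₜ[k₂] (v ^ (-q.2) • Sunit k₂ v s q.2) = 0
      rw [Sunit_zero v r hq, zero_mul, TensorProduct.zero_tmul])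
    (fun q hq => by
      show (Sunit k₂ v r q.1 * SF k₂ v r) ⊗ₜ[k₂] (v ^ (-q.2) • Sunit k₂ v s q.2) = 0
      rw [Sunit_zero v s hq, smul_zero, TensorProduct.tmul_zero])
    (fun q hq => by
      show (Sunit k₂ v r q.1 * SF k₂ v r) ⊗ₜ[k₂] (v ^ (-q.2) • Sunit k₂ v s q.2) = 0
      rw [Sunit_SF, Sunit_zero v r (by simpa [sub_neg_eq_add] using hq), mul_zero,
        TensorProduct.zero_tmul])
    (fun q hq => by
      show (Sunit k₂ v r q.1 * SF k₂ v r) ⊗ₜ[k₂] (v ^ (-q.2) • Sunit k₂ v s q.2) = 0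
      rw [Sunit_zero v s (by simpa using hq), smul_zero, TensorProduct.tmul_zero])
  have key2 := sum_shift2 r s i 0 (-2)
    (fun q : ℤ × ℤ => Sunit k₂ v r q.1 ⊗ₜ[k₂] (Sunit k₂ v s q.2 * SF k₂ v s))
    (fun q hq => by
      show Sunit k₂ v r q.1 ⊗ₜ[k₂] (Sunit k₂ v s q.2 * SF k₂ v s) = 0
      rw [Sunit_zero v r hq, TensorProduct.zero_tmul])
    (fun q hq => by
      show Sunit k₂ v r q.1 ⊗ₜ[k₂] (Sunit k₂ v s q.2 * SF k₂ v s) = 0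
      rw [Sunit_zero v s hq, zero_mul, TensorProduct.tmul_zero])
    (fun q hq => by
      show Sunit k₂ v r q.1 ⊗ₜ[k₂] (Sunit k₂ v s q.2 * SF k₂ v s) = 0
      rw [Sunit_zero v r (by simpa using hq), TensorProduct.zero_tmul])
    (fun q hq => by
      show Sunit k₂ v r q.1 ⊗ₜ[k₂] (Sunit k₂ v s q.2 * SF k₂ v s) = 0
      rw [Sunit_SF, Sunit_zero v s (by simpa [sub_neg_eq_add] using hq), mul_zero,
        TensorProduct.tmul_zero])
  simp only [add_zero, ← sub_eq_add_neg] at key1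
  simp only [add_zero, zero_add, ← sub_eq_add_neg] at key2
  rw [Fh, Uh, Uh, add_mul, mul_add, Finset.mul_sum, Finset.mul_sum, Finset.sum_mul,
    Finset.sum_mul]
  congr 1
  · calc ∑ p ∈ (Xset r ×ˢ Xset s).filter (fun p => p.1 + p.2 = i),
        (SF k₂ v r ⊗ₜ[k₂] (∑ b ∈ Xset s, v ^ (-b) • Sunit k₂ v s b)) *
          (Sunit k₂ v r p.1 ⊗ₜ[k₂] Sunit k₂ v s p.2)
        = ∑ p ∈ (Xset r ×ˢ Xset s).filter (fun p => p.1 + p.2 = i),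
            (Sunit k₂ v r (p.1 - 2) * SF k₂ v r) ⊗ₜ[k₂] (v ^ (-p.2) • Sunit k₂ v s p.2) := by
          refine Finset.sum_congr rfl fun p _ => ?_
          rw [Algebra.TensorProduct.tmul_mul_tmul, SF_unit,
            Ksum_mul_unit v s (fun b => v ^ (-b))]
      _ = ∑ q ∈ (Xset r ×ˢ Xset s).filter (fun q => q.1 + q.2 = i - 2),
            (Sunit k₂ v r q.1 * SF k₂ v r) ⊗ₜ[k₂] (v ^ (-q.2) • Sunit k₂ v s q.2) := key1
      _ = ∑ q ∈ (Xset r ×ˢ Xset s).filter (fun q => q.1 + q.2 = i - 2),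
            (Sunit k₂ v r q.1 ⊗ₜ[k₂] Sunit k₂ v s q.2) *
              (SF k₂ v r ⊗ₜ[k₂] (∑ b ∈ Xset s, v ^ (-b) • Sunit k₂ v s b)) := by
          refine Finset.sum_congr rfl fun q _ => ?_
          rw [Algebra.TensorProduct.tmul_mul_tmul, unit_mul_Ksum v s (fun b => v ^ (-b))]
  · calc ∑ p ∈ (Xset r ×ˢ Xset s).filter (fun p => p.1 + p.2 = i),
        ((1 : SchurAlg k₂ v r) ⊗ₜ[k₂] SF k₂ v s) * (Sunit k₂ v r p.1 ⊗ₜ[k₂] Sunit k₂ v s p.2)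
        = ∑ p ∈ (Xset r ×ˢ Xset s).filter (fun p => p.1 + p.2 = i),
            Sunit k₂ v r p.1 ⊗ₜ[k₂] (Sunit k₂ v s (p.2 - 2) * SF k₂ v s) := by
          refine Finset.sum_congr rfl fun p _ => ?_
          rw [Algebra.TensorProduct.tmul_mul_tmul, one_mul, SF_unit]
      _ = ∑ q ∈ (Xset r ×ˢ Xset s).filter (fun q => q.1 + q.2 = i - 2),
            Sunit k₂ v r q.1 ⊗ₜ[k₂] (Sunit k₂ v s q.2 * SF k₂ v s) := key2
      _ = ∑ q ∈ (Xset r ×ˢ Xset s).filter (fun q => q.1 + q.2 = i - 2),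
            (Sunit k₂ v r q.1 ⊗ₜ[k₂] Sunit k₂ v s q.2) *
              ((1 : SchurAlg k₂ v r) ⊗ₜ[k₂] SF k₂ v s) := by
          refine Finset.sum_congr rfl fun q _ => ?_
          rw [Algebra.TensorProduct.tmul_mul_tmul, mul_one]

lemma EhFh_comm (hv : v ≠ 0) :
    Eh v r s * Fh v r s - Fh v r s * Eh v r s
      = ∑ i ∈ Xset (r + s), qint v i • Uh v r s i := by
  have cross1 : (∑ i ∈ Xset r, v ^ i • Sunit k₂ v r i) * SF k₂ v r
      = SF k₂ v r * ((v : k₂) ^ (-2 : ℤ) • ∑ i ∈ Xset r, v ^ i • Sunit k₂ v r i) := by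
    rw [Ksum_mul_SF v r (fun i => v ^ i), Finset.smul_sum]
    congr 1
    refine Finset.sum_congr rfl fun i _ => ?_
    rw [smul_smul, ← zpow_add₀ hv, show (-2 : ℤ) + i = i - 2 by ring]
  have cross2 : (∑ i ∈ Xset s, v ^ (-i) • Sunit k₂ v s i) * SE k₂ v s
      = SE k₂ v s * ((v : k₂) ^ (-2 : ℤ) • ∑ i ∈ Xset s, v ^ (-i) • Sunit k₂ v s i) := by
    rw [Ksum_mul_SE v s (fun i => v ^ (-i)), Finset.smul_sum]
    congr 1
    refine Finset.sum_congr rfl fun i _ => ?_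
    rw [smul_smul, ← zpow_add₀ hv, show (-2 : ℤ) + -i = -(i + 2) by ring]
  have expand : Eh v r s * Fh v r s - Fh v r s * Eh v r s
      = (SE k₂ v r * SF k₂ v r - SF k₂ v r * SE k₂ v r) ⊗ₜ[k₂]
          (∑ i ∈ Xset s, v ^ (-i) • Sunit k₂ v s i)
        + (∑ i ∈ Xset r, v ^ i • Sunit k₂ v r i) ⊗ₜ[k₂]
            (SE k₂ v s * SF k₂ v s - SF k₂ v s * SE k₂ v s) := by
    simp only [Eh, Fh, mul_add, add_mul, Algebra.TensorProduct.tmul_mul_tmul, one_mul, mul_one,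
      TensorProduct.sub_tmul, TensorProduct.tmul_sub]
    rw [cross1, cross2]
    simp only [mul_smul_comm, ← TensorProduct.smul_tmul', TensorProduct.tmul_smul]
    abel
  have rhs : ∑ i ∈ Xset (r + s), qint v i • Uh v r s i
      = ∑ a ∈ Xset r, ∑ b ∈ Xset s,
          qint v (a + b) • (Sunit k₂ v r a ⊗ₜ[k₂] Sunit k₂ v s b) := by
    simp only [Uh, Finset.smul_sum]
    have hcongr : ∀ i ∈ Xset (r + s),
        ∑ p ∈ (Xset r ×ˢ Xset s).filter (fun p => p.1 + p.2 = i),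
          qint v i • (Sunit k₂ v r p.1 ⊗ₜ[k₂] Sunit k₂ v s p.2)
        = ∑ p ∈ (Xset r ×ˢ Xset s).filter (fun p => p.1 + p.2 = i),
            qint v (p.1 + p.2) • (Sunit k₂ v r p.1 ⊗ₜ[k₂] Sunit k₂ v s p.2) := by
      intro i _
      refine Finset.sum_congr rfl fun p hp => ?_
      rw [(Finset.mem_filter.mp hp).2]
    rw [Finset.sum_congr rfl hcongr,
      Finset.sum_fiberwise_of_maps_to (g := fun p : ℤ × ℤ => p.1 + p.2)
        (fun p hp => by
          have hm := Finset.mem_product.mp hp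
          exact Xset_add hm.1 hm.2)
        (fun p : ℤ × ℤ => qint v (p.1 + p.2) • (Sunit k₂ v r p.1 ⊗ₜ[k₂] Sunit k₂ v s p.2)),
      Finset.sum_product]
  have lhs1 : (∑ a ∈ Xset r, qint v a • Sunit k₂ v r a) ⊗ₜ[k₂]
        (∑ b ∈ Xset s, v ^ (-b) • Sunit k₂ v s b)
      = ∑ a ∈ Xset r, ∑ b ∈ Xset s,
          (v ^ (-b) * qint v a) • (Sunit k₂ v r a ⊗ₜ[k₂] Sunit k₂ v s b) := by
    rw [TensorProduct.sum_tmul]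
    refine Finset.sum_congr rfl fun a _ => ?_
    rw [TensorProduct.tmul_sum]
    refine Finset.sum_congr rfl fun b _ => ?_
    rw [TensorProduct.tmul_smul, ← TensorProduct.smul_tmul', smul_smul]
  have lhs2 : (∑ a ∈ Xset r, v ^ a • Sunit k₂ v r a) ⊗ₜ[k₂]
        (∑ b ∈ Xset s, qint v b • Sunit k₂ v s b)
      = ∑ a ∈ Xset r, ∑ b ∈ Xset s,
          (qint v b * v ^ a) • (Sunit k₂ v r a ⊗ₜ[k₂] Sunit k₂ v s b) := by
    rw [TensorProduct.sum_tmul]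
    refine Finset.sum_congr rfl fun a _ => ?_
    rw [TensorProduct.tmul_sum]
    refine Finset.sum_congr rfl fun b _ => ?_
    rw [TensorProduct.tmul_smul, ← TensorProduct.smul_tmul', smul_smul]
  rw [expand, SEF_comm v r, SEF_comm v s, rhs, lhs1, lhs2, ← Finset.sum_add_distrib]
  refine Finset.sum_congr rfl fun a _ => ?_
  rw [← Finset.sum_add_distrib]
  refine Finset.sum_congr rfl fun b _ => ?_
  rw [← add_smul, qint_add hv a b]
  congr 1
  ring

/-- The comultiplication on generators. -/
def gmap : SchurGen → SchurAlg k₂ v r ⊗[k₂] SchurAlg k₂ v s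
  | SchurGen.E => Eh v r s
  | SchurGen.F => Fh v r s
  | SchurGen.unit i => Uh v r s i

end AuxTensor

/-- existence and uniqueness of the comultiplication-type algebra map
`Δ : S(r+s) → S(r) ⊗ S(s)`. -/
theorem stmt_6 (k : Type*) [Field k] (v : k) (hv : v ≠ 0) (r s : ℕ) :
    ∃! Δ : SchurAlg k v (r + s) →ₐ[k] (SchurAlg k v r ⊗[k] SchurAlg k v s),
      Δ (SE k v (r + s)) =
        SE k v r ⊗ₜ[k] 1 + (∑ i ∈ Xset r, v ^ i • Sunit k v r i) ⊗ₜ[k] SE k v s ∧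
      Δ (SF k v (r + s)) =
        SF k v r ⊗ₜ[k] (∑ i ∈ Xset s, v ^ (-i) • Sunit k v s i) + 1 ⊗ₜ[k] SF k v s ∧
      ∀ i ∈ Xset (r + s),
        Δ (Sunit k v (r + s) i) =
          ∑ p ∈ (Xset r ×ˢ Xset s).filter (fun p => p.1 + p.2 = i),
            Sunit k v r p.1 ⊗ₜ[k] Sunit k v s p.2 := by
  classical
  set φ : FreeAlgebra k SchurGen →ₐ[k] SchurAlg k v r ⊗[k] SchurAlg k v s :=
    FreeAlgebra.lift k (gmap v r s) with hφ
  have hφE : φ (FreeAlgebra.ι k SchurGen.E) = Eh v r s := by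
    rw [hφ, FreeAlgebra.lift_ι_apply]; rfl
  have hφF : φ (FreeAlgebra.ι k SchurGen.F) = Fh v r s := by
    rw [hφ, FreeAlgebra.lift_ι_apply]; rfl
  have hφu : ∀ i : ℤ, φ (FreeAlgebra.ι k (SchurGen.unit i)) = Uh v r s i := by
    intro i
    rw [hφ, FreeAlgebra.lift_ι_apply]; rfl
  have hrel : ∀ ⦃x y⦄, SchurRel k v (r + s) x y → φ x = φ y := by
    intro x y h
    induction h with
    | idem i hi j hj =>
        rw [map_mul, hφu, hφu, apply_ite φ, map_zero, hφu]
        exact Uh_mul v r s i j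
    | sum_one =>
        rw [map_sum, map_one]
        simp only [hφu]
        exact Uh_sum v r s
    | unit_zero i hi =>
        rw [hφu, map_zero]
        exact Uh_zero v r s hi
    | comm =>
        rw [map_sub, map_mul, map_mul, map_sum]
        simp only [map_smul, hφE, hφF, hφu]
        exact EhFh_comm v r s hv
    | Eu i =>
        rw [map_mul, map_mul, hφu, hφu, hφE]
        exact Eh_Uh v r s i
    | Fu i =>
        rw [map_mul, map_mul, hφu, hφu, hφF]
        exact Fh_Uh v r s i
    | uE i =>
        rw [map_mul, map_mul, hφu, hφu, hφE]
        have h := Eh_Uh v r s (i - 2)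
        rw [show i - 2 + 2 = i by ring] at h
        exact h.symm
    | uF i =>
        rw [map_mul, map_mul, hφu, hφu, hφF]
        have h := Fh_Uh v r s (i + 2)
        rw [show i + 2 - 2 = i by ring] at h
        exact h.symm
  have hE0 : (RingQuot.liftAlgHom k ⟨φ, hrel⟩) (SE k v (r + s))
      = SE k v r ⊗ₜ[k] 1 + (∑ i ∈ Xset r, v ^ i • Sunit k v r i) ⊗ₜ[k] SE k v s := by
    show (RingQuot.liftAlgHom k ⟨φ, hrel⟩)
      ((RingQuot.mkAlgHom k (SchurRel k v (r + s))) (FreeAlgebra.ι k SchurGen.E)) = _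
    rw [RingQuot.liftAlgHom_mkAlgHom_apply, hφE, Eh]
  have hF0 : (RingQuot.liftAlgHom k ⟨φ, hrel⟩) (SF k v (r + s))
      = SF k v r ⊗ₜ[k] (∑ i ∈ Xset s, v ^ (-i) • Sunit k v s i) + 1 ⊗ₜ[k] SF k v s := by
    show (RingQuot.liftAlgHom k ⟨φ, hrel⟩)
      ((RingQuot.mkAlgHom k (SchurRel k v (r + s))) (FreeAlgebra.ι k SchurGen.F)) = _
    rw [RingQuot.liftAlgHom_mkAlgHom_apply, hφF, Fh]
  have hU0 : ∀ i : ℤ, (RingQuot.liftAlgHom k ⟨φ, hrel⟩) (Sunit k v (r + s) i)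
      = Uh v r s i := by
    intro i
    show (RingQuot.liftAlgHom k ⟨φ, hrel⟩)
      ((RingQuot.mkAlgHom k (SchurRel k v (r + s))) (FreeAlgebra.ι k (SchurGen.unit i))) = _
    rw [RingQuot.liftAlgHom_mkAlgHom_apply, hφu]
  refine ⟨RingQuot.liftAlgHom k ⟨φ, hrel⟩, ⟨hE0, hF0, fun i _ => ?_⟩, ?_⟩
  · rw [hU0 i, Uh]
  · rintro Δ' ⟨h1, h2, h3⟩
    apply RingQuot.ringQuot_ext'
    apply FreeAlgebra.hom_ext
    funext g
    simp only [Function.comp_apply, AlgHom.coe_comp]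
    cases g with
    | E =>
        show Δ' (SE k v (r + s)) = (RingQuot.liftAlgHom k ⟨φ, hrel⟩) (SE k v (r + s))
        rw [h1, hE0]
    | F =>
        show Δ' (SF k v (r + s)) = (RingQuot.liftAlgHom k ⟨φ, hrel⟩) (SF k v (r + s))
        rw [h2, hF0]
    | unit i =>
        show Δ' (Sunit k v (r + s) i) = (RingQuot.liftAlgHom k ⟨φ, hrel⟩) (Sunit k v (r + s) i)
        by_cases hi : i ∈ Xset (r + s)
        · rw [h3 i hi, hU0 i, Uh]
        · rw [Sunit_zero v (r + s) hi, map_zero, map_zero]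
end
end
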